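/- arXiv:1105.5777 — 5 statements merged into one kernel-verified Lean document; each statement's English description precedes it below -/
import Mathlib

section
/- For all complex numbers x, y with x ≠ 0, y ≠ 0 and x + y ≠ 0, the Yang R-matrix satisfies the Yang–Baxter equation R₁₂(x) R₁₃(x+y) R₂₃(y) = R₂₃(y) R₁₃(x+y) R₁₂(x) as operators on (ℂⁿ)^{⊗3}. -/
noncomputable section
open scoped Kronecker
open Matrix

/-- Square matrices acting on the tensor power `(ℂⁿ)^{⊗ι}`, modelled on the
function basis `ι → Fin n`. -/
abbrev TMat (ι : Type) (n : ℕ) := Matrix (ι → Fin n) (ι → Fin n) ℂ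

/-- The matrix units `E_{ij}` of `End(ℂⁿ)`. -/
def matE (n : ℕ) (i j : Fin n) : Matrix (Fin n) (Fin n) ℂ := Matrix.single i j 1

/-- The flip `P = Σ E_{ij} ⊗ E_{ji}` on `ℂⁿ ⊗ ℂⁿ`. -/
def flipP (n : ℕ) : Matrix (Fin n × Fin n) (Fin n × Fin n) ℂ :=
  ∑ i : Fin n, ∑ j : Fin n, matE n i j ⊗ₖ matE n j i

/-- `P̄ = Σ E_{ij} ⊗ E_{ij}` on `ℂⁿ ⊗ ℂⁿ`. -/
def PbarM (n : ℕ) : Matrix (Fin n × Fin n) (Fin n × Fin n) ℂ :=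
  ∑ i : Fin n, ∑ j : Fin n, matE n i j ⊗ₖ matE n i j

/-- The conjugate `X̃ = G⁻¹ Xᵀ G` of `X` relative to the bilinear form with
Gram matrix `G`, i.e. `⟨X u, v⟩ = ⟨u, X̃ v⟩` where `⟨u, v⟩ = uᵀ G v`. -/
def conjF {n : ℕ} (G X : Matrix (Fin n) (Fin n) ℂ) : Matrix (Fin n) (Fin n) ℂ :=
  G⁻¹ * Xᵀ * G

/-- `P̃ = Σ Ẽ_{ij} ⊗ E_{ji}`. -/
def PtilM (n : ℕ) (G : Matrix (Fin n) (Fin n) ℂ) : Matrix (Fin n × Fin n) (Fin n × Fin n) ℂ :=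
  ∑ i : Fin n, ∑ j : Fin n, conjF G (matE n i j) ⊗ₖ matE n j i

/-- `P̂ = Σ Ẽ_{ij} ⊗ E_{ij}`. -/
def PhatM (n : ℕ) (G : Matrix (Fin n) (Fin n) ℂ) : Matrix (Fin n × Fin n) (Fin n × Fin n) ℂ :=
  ∑ i : Fin n, ∑ j : Fin n, conjF G (matE n i j) ⊗ₖ matE n i j

/-- The Yang R-matrix `R(x) = 1 − P x⁻¹`. -/
def Rm (n : ℕ) (x : ℂ) : Matrix (Fin n × Fin n) (Fin n × Fin n) ℂ := 1 - x⁻¹ • flipP n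

/-- `R̄(x) = 1 − P̄ x⁻¹`. -/
def RbarM (n : ℕ) (x : ℂ) : Matrix (Fin n × Fin n) (Fin n × Fin n) ℂ := 1 - x⁻¹ • PbarM n

/-- `R̃(x) = 1 − P̃ x⁻¹`. -/
def RtilM (n : ℕ) (G : Matrix (Fin n) (Fin n) ℂ) (x : ℂ) :
    Matrix (Fin n × Fin n) (Fin n × Fin n) ℂ := 1 - x⁻¹ • PtilM n G

/-- `R̂(x) = 1 − P̂ x⁻¹`. -/
def RhatM (n : ℕ) (G : Matrix (Fin n) (Fin n) ℂ) (x : ℂ) :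
    Matrix (Fin n × Fin n) (Fin n × Fin n) ℂ := 1 - x⁻¹ • PhatM n G

/-- `Z_{ij}` : the operator on a tensor power of `ℂⁿ` acting as the two-factor
operator `Z` in the `i`-th and `j`-th tensor factors and as the identity elsewhere. -/
def lift2 {n : ℕ} {ι : Type} [Fintype ι] [DecidableEq ι] (i j : ι)
    (Z : Matrix (Fin n × Fin n) (Fin n × Fin n) ℂ) : TMat ι n :=
  fun f g => Z (f i, f j) (g i, g j) *
    ∏ p : ι, if p = i ∨ p = j then 1 else (if f p = g p then 1 else 0)

lemma flipP_apply (n : ℕ) (a b c d : Fin n) :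
    flipP n (a, b) (c, d) = if a = d ∧ b = c then 1 else 0 := by
  simp [flipP, matE, Matrix.sum_apply, Matrix.kroneckerMap_apply, Matrix.single,
    ite_and, Finset.sum_ite_eq, Finset.sum_ite_eq']
  aesop

def permM (n : ℕ) (σ : Equiv.Perm (Fin 3)) : TMat (Fin 3) n :=
  fun f g => if f = g ∘ σ then 1 else 0

lemma permM_one (n : ℕ) : permM n 1 = 1 := by
  ext f g
  simp [permM, Matrix.one_apply, Function.comp]

lemma permM_mul (n : ℕ) (σ τ : Equiv.Perm (Fin 3)) :
    permM n σ * permM n τ = permM n (τ * σ) := by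
  ext f g
  rw [Matrix.mul_apply, Finset.sum_eq_single (g ∘ τ)]
  · simp [permM, Function.comp_assoc]
    congr
  · intro h _ hne
    simp [permM, hne]
  · simp

lemma prod_ind {n : ℕ} (f g : Fin 3 → Fin n) (i j : Fin 3) :
    (∏ p : Fin 3, if p = i ∨ p = j then (1:ℂ) else if f p = g p then 1 else 0)
      = if ∀ p, ¬(p = i ∨ p = j) → f p = g p then 1 else 0 := by
  split
  · next h =>
    apply Finset.prod_eq_one
    intro p _
    by_cases hp : p = i ∨ p = j
    · simp [hp]
    · simp [hp, h p hp]
  · next h =>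
    push_neg at h
    obtain ⟨p, hp, hfg⟩ := h
    exact Finset.prod_eq_zero (Finset.mem_univ p) (by simp [hp.1, hp.2, hfg])

lemma lift2_Rm (n : ℕ) (x : ℂ) (i j : Fin 3) (hij : i ≠ j) :
    lift2 i j (Rm n x) = (1 : TMat (Fin 3) n) - x⁻¹ • permM n (Equiv.swap i j) := by
  ext f g
  have e1 : ((if f i = g i ∧ f j = g j then (1:ℂ) else 0) *
      (if (∀ p, ¬(p = i ∨ p = j) → f p = g p) then 1 else 0)) = if f = g then 1 else 0 := by
    by_cases h1 : f i = g i ∧ f j = g j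
    · by_cases h2 : ∀ p, ¬(p = i ∨ p = j) → f p = g p
      · have hfg : f = g := funext fun p => by
          by_cases hpi : p = i
          · subst hpi; exact h1.1
          by_cases hpj : p = j
          · subst hpj; exact h1.2
          exact h2 p (by tauto)
        rw [if_pos h1, if_pos h2, if_pos hfg, one_mul]
      · have hfg : ¬ f = g := fun hfg => h2 (fun p _ => by rw [hfg])
        rw [if_pos h1, if_neg h2, if_neg hfg, mul_zero]
    · have hfg : ¬ f = g := fun hfg => h1 (by rw [hfg]; exact ⟨rfl, rfl⟩)
      rw [if_neg h1, if_neg hfg, zero_mul]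
  have e2 : ((if f i = g j ∧ f j = g i then (1:ℂ) else 0) *
      (if (∀ p, ¬(p = i ∨ p = j) → f p = g p) then 1 else 0))
        = if f = g ∘ Equiv.swap i j then 1 else 0 := by
    by_cases h1 : f i = g j ∧ f j = g i
    · by_cases h2 : ∀ p, ¬(p = i ∨ p = j) → f p = g p
      · have hfg : f = g ∘ Equiv.swap i j := funext fun p => by
          by_cases hpi : p = i
          · subst hpi; simpa using h1.1
          by_cases hpj : p = j
          · subst hpj; simpa using h1.2
          simpa [Equiv.swap_apply_of_ne_of_ne hpi hpj] using h2 p (by tauto)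
        rw [if_pos h1, if_pos h2, if_pos hfg, one_mul]
      · have hfg : ¬ f = g ∘ Equiv.swap i j := fun hfg => h2 (fun p hp => by
          push_neg at hp
          rw [hfg]; simp [Equiv.swap_apply_of_ne_of_ne hp.1 hp.2])
        rw [if_pos h1, if_neg h2, if_neg hfg, mul_zero]
    · have hfg : ¬ f = g ∘ Equiv.swap i j := fun hfg => h1 (by
        rw [hfg]; constructor <;> simp)
      rw [if_neg h1, if_neg hfg, zero_mul]
  simp only [lift2, Rm, Matrix.sub_apply, Matrix.smul_apply, Matrix.one_apply, permM,
    flipP_apply, smul_eq_mul, Prod.mk.injEq, prod_ind, sub_mul, mul_assoc]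
  rw [e1, e2]

lemma ybe_key {M : Type*} [Ring M] [Algebra ℂ M] (x y : ℂ)
    (hx : x ≠ 0) (hy : y ≠ 0) (hxy : x + y ≠ 0)
    (A B C U V : M)
    (hAB : A * B = U) (hCA : C * A = U) (hBC : B * C = U)
    (hBA : B * A = V) (hAC : A * C = V) (hCB : C * B = V)
    (hUC : U * C = B) (hVA : V * A = B) (hAU : A * U = B) (hCV : C * V = B) :
    (1 - x⁻¹ • A) * (1 - (x + y)⁻¹ • B) * (1 - y⁻¹ • C)
      = (1 - y⁻¹ • C) * (1 - (x + y)⁻¹ • B) * (1 - x⁻¹ • A) := by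
  simp only [mul_sub, sub_mul, one_mul, mul_one, smul_mul_assoc, mul_smul_comm, smul_smul,
    mul_assoc]
  simp only [← mul_assoc, hAB, hCA, hBC, hBA, hAC, hCB, hUC, hVA, hAU, hCV]
  match_scalars <;> field_simp <;> ring

/-- The Yang–Baxter equation `R₁₂(x) R₁₃(x+y) R₂₃(y) = R₂₃(y) R₁₃(x+y) R₁₂(x)`
on `(ℂⁿ)^{⊗3}`. -/
theorem stmt0 (n : ℕ) (hn : 1 ≤ n) (x y : ℂ) (hx : x ≠ 0) (hy : y ≠ 0) (hxy : x + y ≠ 0) :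
    lift2 (0 : Fin 3) 1 (Rm n x) * lift2 (0 : Fin 3) 2 (Rm n (x + y)) *
      lift2 (1 : Fin 3) 2 (Rm n y)
  = lift2 (1 : Fin 3) 2 (Rm n y) * lift2 (0 : Fin 3) 2 (Rm n (x + y)) *
      lift2 (0 : Fin 3) 1 (Rm n x) := by
  have h01 : (0:Fin 3) ≠ 1 := by decide
  have h02 : (0:Fin 3) ≠ 2 := by decide
  have h12 : (1:Fin 3) ≠ 2 := by decide
  rw [lift2_Rm n x 0 1 h01, lift2_Rm n (x + y) 0 2 h02, lift2_Rm n y 1 2 h12]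
  set A := permM n (Equiv.swap 0 1) with hA
  set B := permM n (Equiv.swap 0 2) with hB
  set C := permM n (Equiv.swap 1 2) with hC
  set U := permM n (Equiv.swap 0 2 * Equiv.swap 0 1) with hU
  set V := permM n (Equiv.swap 0 1 * Equiv.swap 0 2) with hV
  have hAB : A * B = U := by rw [hA, hB, hU, permM_mul]
  have hCA : C * A = U := by
    rw [hC, hA, hU, permM_mul]
    exact congrArg (permM n) (by decide : Equiv.swap (0:Fin 3) 1 * Equiv.swap 1 2 = Equiv.swap 0 2 * Equiv.swap 0 1)

  have hBC : B * C = U := by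
    rw [hB, hC, hU, permM_mul]
    exact congrArg (permM n) (by decide : Equiv.swap (1:Fin 3) 2 * Equiv.swap 0 2 = Equiv.swap 0 2 * Equiv.swap 0 1)

  have hBA : B * A = V := by rw [hB, hA, hV, permM_mul]
  have hAC : A * C = V := by
    rw [hA, hC, hV, permM_mul]
    exact congrArg (permM n) (by decide : Equiv.swap (1:Fin 3) 2 * Equiv.swap 0 1 = Equiv.swap 0 1 * Equiv.swap 0 2)

  have hCB : C * B = V := by
    rw [hC, hB, hV, permM_mul]
    exact congrArg (permM n) (by decide : Equiv.swap (0:Fin 3) 2 * Equiv.swap 1 2 = Equiv.swap 0 1 * Equiv.swap 0 2)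

  have hUC : U * C = B := by
    rw [hU, hC, hB, permM_mul]
    exact congrArg (permM n) (by decide : Equiv.swap (1:Fin 3) 2 * (Equiv.swap 0 2 * Equiv.swap 0 1) = Equiv.swap 0 2)

  have hVA : V * A = B := by
    rw [hV, hA, hB, permM_mul]
    exact congrArg (permM n) (by decide : Equiv.swap (0:Fin 3) 1 * (Equiv.swap 0 1 * Equiv.swap 0 2) = Equiv.swap 0 2)

  have hAU : A * U = B := by
    rw [hA, hU, hB, permM_mul]
    exact congrArg (permM n) (by decide : Equiv.swap (0:Fin 3) 2 * Equiv.swap 0 1 * Equiv.swap 0 1 = Equiv.swap 0 2)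

  have hCV : C * V = B := by
    rw [hC, hV, hB, permM_mul]
    exact congrArg (permM n) (by decide : Equiv.swap (0:Fin 3) 1 * Equiv.swap 0 2 * Equiv.swap 1 2 = Equiv.swap 0 2)

  exact ybe_key x y hx hy hxy A B C U V hAB hCA hBC hBA hAC hCB hUC hVA hAU hCV
end
end

section
/- For all complex numbers x, y with x ≠ 0, y ≠ 0 and x + y ≠ 0, one has R̂₁₂(x) R̂₁₃(x+y) R₂₃(y) = R₂₃(y) R̂₁₃(x+y) R̂₁₂(x) as operators on (ℂⁿ)^{⊗3}. -/
noncomputable section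
open scoped Kronecker
open Matrix

-- auxiliary
namespace Stmt3Aux

variable {n : ℕ}

lemma fun3_ext_iff (f g : Fin 3 → Fin n) : f = g ↔ f 0 = g 0 ∧ f 1 = g 1 ∧ f 2 = g 2 := by
  constructor
  · rintro rfl; exact ⟨rfl, rfl, rfl⟩
  · rintro ⟨h0, h1, h2⟩; funext i; fin_cases i <;> assumption

def e3 (n : ℕ) : (Fin n × Fin n × Fin n) ≃ (Fin 3 → Fin n) where
  toFun p := ![p.1, p.2.1, p.2.2]
  invFun f := (f 0, f 1, f 2)
  left_inv := by rintro ⟨a, b, c⟩; rfl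
  right_inv := by intro f; funext i; fin_cases i <;> rfl

lemma PhatM_apply (G : Matrix (Fin n) (Fin n) ℂ) (a b c d : Fin n) :
    PhatM n G (a, c) (b, d) = G⁻¹ a d * G c b := by
  simp [PhatM, conjF, matE, Matrix.mul_apply, Matrix.single, ite_and,
    Finset.sum_ite_eq, Finset.sum_ite_eq', ite_mul, mul_ite, Finset.sum_mul,
    Finset.mul_sum, Matrix.sum_apply]

lemma flipP_apply (a b c d : Fin n) :
    flipP n (a, c) (b, d) = if a = d then (if b = c then 1 else 0) else 0 := by
  simp [flipP, matE, Matrix.single, ite_and, Finset.sum_ite_eq,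
    Finset.sum_ite_eq', ite_mul, mul_ite, Matrix.sum_apply, eq_comm]

def matA (G : Matrix (Fin n) (Fin n) ℂ) : TMat (Fin 3) n :=
  fun f g => G⁻¹ (f 0) (g 1) * G (f 1) (g 0) * (if f 2 = g 2 then 1 else 0)

def matB (G : Matrix (Fin n) (Fin n) ℂ) : TMat (Fin 3) n :=
  fun f g => G⁻¹ (f 0) (g 2) * G (f 2) (g 0) * (if f 1 = g 1 then 1 else 0)

def matC (n : ℕ) : TMat (Fin 3) n :=
  fun f g => (if f 0 = g 0 then 1 else 0) * ((if f 1 = g 2 then 1 else 0) *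
    (if f 2 = g 1 then 1 else 0))

lemma lift2_01 (Z : Matrix (Fin n × Fin n) (Fin n × Fin n) ℂ) :
    lift2 (0 : Fin 3) 1 Z = fun f g => Z (f 0, f 1) (g 0, g 1) * (if f 2 = g 2 then 1 else 0) := by
  funext f g
  norm_num [lift2, Fin.prod_univ_three, show ¬((2:Fin 3) = 0 ∨ (2:Fin 3) = 1) by decide,
    show ¬((1:Fin 3) = 0 ∨ (1:Fin 3) = 2) by decide,
    show ¬((0:Fin 3) = 1 ∨ (0:Fin 3) = 2) by decide,
    show ¬(1:Fin 3) = 2 by decide, show ¬(0:Fin 3) = 2 by decide,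
    show ¬(2:Fin 3) = 0 by decide, show ¬(2:Fin 3) = 1 by decide,
    show ¬(0:Fin 3) = 1 by decide, show ¬(1:Fin 3) = 0 by decide]

lemma lift2_02 (Z : Matrix (Fin n × Fin n) (Fin n × Fin n) ℂ) :
    lift2 (0 : Fin 3) 2 Z = fun f g => Z (f 0, f 2) (g 0, g 2) * (if f 1 = g 1 then 1 else 0) := by
  funext f g
  norm_num [lift2, Fin.prod_univ_three, show ¬((2:Fin 3) = 0 ∨ (2:Fin 3) = 1) by decide,
    show ¬((1:Fin 3) = 0 ∨ (1:Fin 3) = 2) by decide,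
    show ¬((0:Fin 3) = 1 ∨ (0:Fin 3) = 2) by decide,
    show ¬(1:Fin 3) = 2 by decide, show ¬(0:Fin 3) = 2 by decide,
    show ¬(2:Fin 3) = 0 by decide, show ¬(2:Fin 3) = 1 by decide,
    show ¬(0:Fin 3) = 1 by decide, show ¬(1:Fin 3) = 0 by decide]

lemma lift2_12 (Z : Matrix (Fin n × Fin n) (Fin n × Fin n) ℂ) :
    lift2 (1 : Fin 3) 2 Z = fun f g => Z (f 1, f 2) (g 1, g 2) * (if f 0 = g 0 then 1 else 0) := by
  funext f g
  norm_num [lift2, Fin.prod_univ_three, show ¬((2:Fin 3) = 0 ∨ (2:Fin 3) = 1) by decide,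
    show ¬((1:Fin 3) = 0 ∨ (1:Fin 3) = 2) by decide,
    show ¬((0:Fin 3) = 1 ∨ (0:Fin 3) = 2) by decide,
    show ¬(1:Fin 3) = 2 by decide, show ¬(0:Fin 3) = 2 by decide,
    show ¬(2:Fin 3) = 0 by decide, show ¬(2:Fin 3) = 1 by decide,
    show ¬(0:Fin 3) = 1 by decide, show ¬(1:Fin 3) = 0 by decide]

end Stmt3Aux
namespace Stmt3Aux
variable {n : ℕ}

lemma matC_eq_left (f g : Fin 3 → Fin n) :
    matC n f g = if f = ![g 0, g 2, g 1] then 1 else 0 := by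
  simp only [matC, fun3_ext_iff]
  by_cases h0 : f 0 = g 0 <;> by_cases h1 : f 1 = g 2 <;> by_cases h2 : f 2 = g 1 <;>
    simp [h0, h1, h2, Matrix.cons_val_zero, Matrix.cons_val_one]

lemma matC_eq_right (f g : Fin 3 → Fin n) :
    matC n f g = if g = ![f 0, f 2, f 1] then 1 else 0 := by
  rw [matC_eq_left]
  refine if_congr ?_ rfl rfl
  simp only [fun3_ext_iff, Matrix.cons_val_zero, Matrix.cons_val_one, Matrix.head_cons,
    Matrix.cons_val_two, Matrix.tail_cons]
  constructor
  · rintro ⟨a, b, c⟩; exact ⟨a.symm, c.symm, b.symm⟩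
  · rintro ⟨a, b, c⟩; exact ⟨a.symm, c.symm, b.symm⟩

lemma mul_matC (M : TMat (Fin 3) n) :
    M * matC n = fun f g => M f ![g 0, g 2, g 1] := by
  funext f g
  simp only [Matrix.mul_apply, matC_eq_left, mul_ite, mul_one, mul_zero,
    Finset.sum_ite_eq', Finset.mem_univ, if_true]

lemma matC_mul (M : TMat (Fin 3) n) :
    matC n * M = fun f g => M ![f 0, f 2, f 1] g := by
  funext f g
  simp only [Matrix.mul_apply, matC_eq_right, ite_mul, one_mul, zero_mul,
    Finset.sum_ite_eq', Finset.mem_univ, if_true]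

end Stmt3Aux
namespace Stmt3Aux
variable {n : ℕ} (G : Matrix (Fin n) (Fin n) ℂ)

lemma lift2_Phat_01 : lift2 (0 : Fin 3) 1 (PhatM n G) = matA G := by
  funext f g
  rw [lift2_01]
  simp [PhatM_apply, matA]

lemma lift2_Phat_02 : lift2 (0 : Fin 3) 2 (PhatM n G) = matB G := by
  funext f g
  rw [lift2_02]
  simp [PhatM_apply, matB]

lemma lift2_flip_12 : lift2 (1 : Fin 3) 2 (flipP n) = matC n := by
  funext f g
  rw [lift2_12]
  simp only [flipP_apply, matC]
  by_cases h0 : f 0 = g 0 <;> by_cases h1 : f 1 = g 2 <;> by_cases h2 : f 2 = g 1 <;>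
    simp [h0, h1, h2] <;> exact fun h => h2 h.symm

lemma matA_mul_matC : matA G * matC n =
    fun f g => G⁻¹ (f 0) (g 2) * G (f 1) (g 0) * (if f 2 = g 1 then 1 else 0) := by
  rw [mul_matC]
  funext f g
  simp [matA, Matrix.cons_val_two, Matrix.tail_cons, Matrix.head_cons]

lemma matC_mul_matA : matC n * matA G =
    fun f g => G⁻¹ (f 0) (g 1) * G (f 2) (g 0) * (if f 1 = g 2 then 1 else 0) := by
  rw [matC_mul]
  funext f g
  simp [matA, Matrix.cons_val_two, Matrix.tail_cons, Matrix.head_cons]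

lemma matB_eq : matB G = matC n * matA G * matC n := by
  rw [mul_matC, matC_mul_matA]
  funext f g
  simp [matB, Matrix.cons_val_two, Matrix.tail_cons, Matrix.head_cons]

lemma matC_sq : matC n * matC n = (1 : TMat (Fin 3) n) := by
  rw [matC_mul]
  funext f g
  simp only [matC, Matrix.one_apply, fun3_ext_iff]
  by_cases h0 : f 0 = g 0 <;> by_cases h1 : f 1 = g 1 <;> by_cases h2 : f 2 = g 2 <;>
    simp [h0, h1, h2]

lemma keyD (hG : IsUnit G.det) :
    (matA G * matC n) * (matA G * matC n) = matC n * matA G := by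
  funext f g
  rw [Matrix.mul_apply, matA_mul_matC, matC_mul_matA, ← Equiv.sum_comp (e3 n)]
  simp only [e3, Equiv.coe_fn_mk, Fintype.sum_prod_type, Matrix.cons_val_zero,
    Matrix.cons_val_one, Matrix.head_cons, Matrix.cons_val_two, Matrix.tail_cons]
  simp only [mul_ite, ite_mul, mul_zero, zero_mul, mul_one, one_mul,
    Finset.sum_ite_eq, Finset.sum_ite_eq', Finset.mem_univ, if_true]
  have : ∑ x : Fin n, ∑ y : Fin n, (G⁻¹ (f 0) (g 1) * G (f 1) x * if f 2 = y then 1 else 0)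
        * (G⁻¹ x (g 2) * G y (g 0))
      = (G⁻¹ (f 0) (g 1) * G (f 2) (g 0)) * ∑ x : Fin n, G (f 1) x * G⁻¹ x (g 2) := by
    rw [Finset.mul_sum]
    refine Finset.sum_congr rfl fun x _ => ?_
    rw [Finset.sum_eq_single (f 2) (fun b _ hb => by simp [Ne.symm hb]) (by simp)]
    simp only [if_true, mul_one]
    ring
  refine this.trans ?_
  rw [← Matrix.mul_apply, Matrix.mul_nonsing_inv _ hG, Matrix.one_apply]
  by_cases h : f 1 = g 2 <;> simp [h] <;> ring

end Stmt3Aux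
namespace Stmt3Aux
variable {n : ℕ} (G : Matrix (Fin n) (Fin n) ℂ)

lemma lift2_Rhat_01 (x : ℂ) :
    lift2 (0 : Fin 3) 1 (RhatM n G x) = 1 - x⁻¹ • matA G := by
  funext f g
  rw [lift2_01]
  simp only [RhatM, Matrix.sub_apply, Matrix.smul_apply, Matrix.one_apply, PhatM_apply,
    smul_eq_mul, Prod.mk.injEq, matA]
  by_cases h2 : f 2 = g 2 <;>
    by_cases h01 : f 0 = g 0 ∧ f 1 = g 1 <;>
      simp [h2, h01, fun3_ext_iff, sub_mul] <;> tauto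

lemma lift2_Rhat_02 (x : ℂ) :
    lift2 (0 : Fin 3) 2 (RhatM n G x) = 1 - x⁻¹ • matB G := by
  funext f g
  rw [lift2_02]
  simp only [RhatM, Matrix.sub_apply, Matrix.smul_apply, Matrix.one_apply, PhatM_apply,
    smul_eq_mul, Prod.mk.injEq, matB]
  by_cases h1 : f 1 = g 1 <;>
    by_cases h02 : f 0 = g 0 ∧ f 2 = g 2 <;>
      simp [h1, h02, fun3_ext_iff, sub_mul] <;> tauto

lemma lift2_R_12 (x : ℂ) :
    lift2 (1 : Fin 3) 2 (Rm n x) = 1 - x⁻¹ • matC n := by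
  have h := lift2_flip_12 (n := n)
  funext f g
  rw [lift2_12]
  simp only [Rm, Matrix.sub_apply, Matrix.smul_apply, Matrix.one_apply, smul_eq_mul,
    Prod.mk.injEq]
  have hC : matC n f g = flipP n (f 1, f 2) (g 1, g 2) * (if f 0 = g 0 then 1 else 0) := by
    rw [← h, lift2_12]
  rw [hC]
  by_cases h0 : f 0 = g 0 <;>
    by_cases h12 : f 1 = g 1 ∧ f 2 = g 2 <;>
      simp [h0, h12, fun3_ext_iff, sub_mul] <;> tauto

lemma expand3 (a b c : ℂ) (A B C : TMat (Fin 3) n) :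
    (1 - a • A) * (1 - b • B) * (1 - c • C)
      = 1 - a • A - b • B - c • C + (a * b) • (A * B) + (a * c) • (A * C)
        + (b * c) • (B * C) - (a * b * c) • (A * B * C) := by
  simp only [sub_mul, mul_sub, one_mul, mul_one, smul_mul_assoc, mul_smul_comm, smul_smul,
    smul_sub]
  abel_nf
  module

end Stmt3Aux
open Stmt3Aux in
/-- `R̂₁₂(x) R̂₁₃(x+y) R₂₃(y) = R₂₃(y) R̂₁₃(x+y) R̂₁₂(x)` on `(ℂⁿ)^{⊗3}`,
for the conjugation relative to any non-degenerate symmetric or alternating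
bilinear form on `ℂⁿ` (with Gram matrix `G`). -/
theorem stmt3 (n : ℕ) (hn : 1 ≤ n) (G : Matrix (Fin n) (Fin n) ℂ)
    (hG : IsUnit G.det) (hform : Gᵀ = G ∨ Gᵀ = -G)
    (x y : ℂ) (hx : x ≠ 0) (hy : y ≠ 0) (hxy : x + y ≠ 0) :
    lift2 (0 : Fin 3) 1 (RhatM n G x) * lift2 (0 : Fin 3) 2 (RhatM n G (x + y)) *
      lift2 (1 : Fin 3) 2 (Rm n y)
  = lift2 (1 : Fin 3) 2 (Rm n y) * lift2 (0 : Fin 3) 2 (RhatM n G (x + y)) *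
      lift2 (0 : Fin 3) 1 (RhatM n G x) := by
  rw [lift2_Rhat_01, lift2_Rhat_02, lift2_R_12]
  set A := matA G with hA
  set B := matB G with hBdef
  set C := matC n with hCdef
  have hB : B = C * A * C := matB_eq G
  have hCC : C * C = 1 := matC_sq
  have hD : (A * C) * (A * C) = C * A := keyD G hG
  have e1 : A * B = C * A := by
    rw [hB, show A * (C * A * C) = (A * C) * (A * C) by noncomm_ring, hD]
  have e2 : B * A = A * C := by
    have h1 : B * A * (C * C) = C * ((A * C) * (A * C)) * C := by rw [hB]; noncomm_ring
    rw [hCC, mul_one, hD] at h1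
    rw [h1, show C * (C * A) * C = (C * C) * (A * C) by noncomm_ring, hCC, one_mul]
  have e3 : B * C = C * A := by
    rw [hB, show C * A * C * C = C * A * (C * C) by noncomm_ring, hCC, mul_one]
  have e4 : C * B = A * C := by
    rw [hB, show C * (C * A * C) = (C * C) * (A * C) by noncomm_ring, hCC, one_mul]
  have e5 : A * B * C = B := by rw [e1]; exact hB.symm
  have e6 : C * B * A = B := by
    rw [e4]
    have h1 : A * C * A * (C * C) = ((A * C) * (A * C)) * C := by noncomm_ring
    rw [hCC, mul_one, hD] at h1
    rw [h1]; exact hB.symm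
  rw [expand3, expand3, e5, e6, e1, e2, e3, e4]
  match_scalars <;> field_simp <;> ring
end
end

section
/- For every complex x with x ≠ 0 and x ≠ −1, one has R̃₁₂(x+1) R̃₁₃(x) R₂₃(1) = (1 − (P̃₁₂ + P̃₁₃) x⁻¹)(1 − P₂₃) as operators on (ℂⁿ)^{⊗3}. -/
noncomputable section
open scoped Kronecker
open Matrix

lemma flipP_apply_s7 (n : ℕ) (p q : Fin n × Fin n) :
    flipP n p q = (if p.1 = q.2 then 1 else 0) * (if p.2 = q.1 then 1 else 0) := by
  simp [flipP, Matrix.sum_apply, matE, Matrix.single, Matrix.of_apply, ite_and, Finset.sum_ite_eq,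
    Finset.sum_ite_eq', mul_comm, eq_comm]

lemma PtilM_apply (n : ℕ) (G : Matrix (Fin n) (Fin n) ℂ) (p q : Fin n × Fin n) :
    PtilM n G p q = G⁻¹ p.1 p.2 * G q.2 q.1 := by
  simp [PtilM, Matrix.sum_apply, conjF, matE, Matrix.mul_apply, Matrix.single, Matrix.of_apply,
    ite_and, Finset.sum_ite_eq, Finset.sum_ite_eq', eq_comm, mul_ite, ite_mul]

lemma lift2_01 {n : ℕ} (Z : Matrix (Fin n × Fin n) (Fin n × Fin n) ℂ) (f g : Fin 3 → Fin n) :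
    lift2 (0 : Fin 3) 1 Z f g = Z (f 0, f 1) (g 0, g 1) * (if f 2 = g 2 then 1 else 0) := by
  simp [lift2, Fin.prod_univ_three]

lemma lift2_02 {n : ℕ} (Z : Matrix (Fin n × Fin n) (Fin n × Fin n) ℂ) (f g : Fin 3 → Fin n) :
    lift2 (0 : Fin 3) 2 Z f g = Z (f 0, f 2) (g 0, g 2) * (if f 1 = g 1 then 1 else 0) := by
  simp [lift2, Fin.prod_univ_three]

lemma lift2_12 {n : ℕ} (Z : Matrix (Fin n × Fin n) (Fin n × Fin n) ℂ) (f g : Fin 3 → Fin n) :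
    lift2 (1 : Fin 3) 2 Z f g = Z (f 1, f 2) (g 1, g 2) * (if f 0 = g 0 then 1 else 0) := by
  simp [lift2, Fin.prod_univ_three]

def e3 (n : ℕ) : (Fin n × Fin n × Fin n) ≃ (Fin 3 → Fin n) where
  toFun p := ![p.1, p.2.1, p.2.2]
  invFun f := (f 0, f 1, f 2)
  left_inv := by rintro ⟨a,b,c⟩; simp
  right_inv f := by funext p; fin_cases p <;> simp

lemma sum_fn3 {n : ℕ} {M : Type*} [AddCommMonoid M] (F : (Fin 3 → Fin n) → M) :
    ∑ g : Fin 3 → Fin n, F g = ∑ a : Fin n, ∑ b : Fin n, ∑ c : Fin n, F ![a,b,c] := by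
  rw [← Equiv.sum_comp (e3 n) F, Fintype.sum_prod_type]
  simp [e3, Fintype.sum_prod_type]

lemma hfh3 {n : ℕ} (f g : Fin 3 → Fin n) :
    f = g ↔ (f 0 = g 0 ∧ f 1 = g 1 ∧ f 2 = g 2) :=
  ⟨fun e => by subst e; exact ⟨rfl, rfl, rfl⟩,
   fun ⟨a, b, c⟩ => by funext p; fin_cases p <;> assumption⟩

lemma CC {n : ℕ} : lift2 (1 : Fin 3) 2 (flipP n) * lift2 (1 : Fin 3) 2 (flipP n) = 1 := by
  ext f h
  rw [Matrix.mul_apply, sum_fn3]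
  simp only [lift2_12, flipP_apply_s7, Matrix.cons_val_zero, Matrix.cons_val_one, Matrix.head_cons,
    Matrix.cons_val_two, Matrix.head_fin_const]
  simp [mul_ite, ite_mul, Finset.sum_ite_eq, Finset.sum_ite_eq', eq_comm]
  rw [Matrix.one_apply]
  simp only [hfh3 f h]
  split_ifs <;> simp_all

lemma ACapp {n : ℕ} (G : Matrix (Fin n) (Fin n) ℂ) (f h : Fin 3 → Fin n) :
    (lift2 (0 : Fin 3) 1 (PtilM n G) * lift2 (1 : Fin 3) 2 (flipP n)) f h
      = G⁻¹ (f 0) (f 1) * G (h 2) (h 0) * (if f 2 = h 1 then 1 else 0) := by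
  rw [Matrix.mul_apply, sum_fn3]
  simp only [lift2_01, lift2_12, PtilM_apply, flipP_apply_s7, Matrix.cons_val_zero,
    Matrix.cons_val_one, Matrix.head_cons, Matrix.cons_val_two, Matrix.head_fin_const]
  simp [mul_ite, ite_mul, Finset.sum_ite_eq, Finset.sum_ite_eq', eq_comm]
  show (if h 1 = f 2 then G⁻¹ (f 0) (f 1) * G (h 2) (h 0) else 0) =
    if h 1 = f 2 then ∑ x, G⁻¹ (f 0) (f 1) * G (h 2) x * (if x = h 0 then 1 else 0) else 0
  simp only [mul_ite, mul_one, mul_zero, Finset.sum_ite_eq', Finset.mem_univ, if_true]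

lemma ABapp {n : ℕ} (G : Matrix (Fin n) (Fin n) ℂ) (hG : IsUnit G.det) (f h : Fin 3 → Fin n) :
    (lift2 (0 : Fin 3) 1 (PtilM n G) * lift2 (0 : Fin 3) 2 (PtilM n G)) f h
      = G⁻¹ (f 0) (f 1) * G (h 2) (h 0) * (if f 2 = h 1 then 1 else 0) := by
  rw [Matrix.mul_apply, sum_fn3]
  simp only [lift2_01, lift2_02, PtilM_apply, Matrix.cons_val_zero,
    Matrix.cons_val_one, Matrix.head_cons, Matrix.cons_val_two, Matrix.head_fin_const]
  simp [mul_ite, ite_mul, Finset.sum_ite_eq, Finset.sum_ite_eq', eq_comm]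
  show (if h 1 = f 2 then G⁻¹ (f 0) (f 1) * G (h 2) (h 0) else 0) =
    ∑ x, ∑ x_1, G⁻¹ (f 0) (f 1) * G x_1 x *
      (G⁻¹ x (f 2) * G (h 2) (h 0) * (if x_1 = h 1 then 1 else 0))
  simp only [mul_ite, mul_one, mul_zero, Finset.sum_ite_eq', Finset.mem_univ, if_true]
  rw [show (∑ x : Fin n, G⁻¹ (f 0) (f 1) * G (h 1) x * (G⁻¹ x (f 2) * G (h 2) (h 0)))
      = (G⁻¹ (f 0) (f 1) * G (h 2) (h 0)) * ∑ a, G (h 1) a * G⁻¹ a (f 2) from by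
    rw [Finset.mul_sum]; exact Finset.sum_congr rfl fun a _ => by ring]
  rw [← Matrix.mul_apply, Matrix.mul_nonsing_inv G hG, Matrix.one_apply]
  split_ifs <;> simp_all

lemma lift2_sub {n : ℕ} {ι : Type} [Fintype ι] [DecidableEq ι] (i j : ι)
    (Y Z : Matrix (Fin n × Fin n) (Fin n × Fin n) ℂ) :
    lift2 i j (Y - Z) = lift2 i j Y - lift2 i j Z := by
  ext f g; simp [lift2, sub_mul]

lemma lift2_smul {n : ℕ} {ι : Type} [Fintype ι] [DecidableEq ι] (i j : ι) (c : ℂ)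
    (Z : Matrix (Fin n × Fin n) (Fin n × Fin n) ℂ) :
    lift2 i j (c • Z) = c • lift2 i j Z := by
  ext f g; simp [lift2]; ring

lemma lift2_one01 {n : ℕ} :
    lift2 (0 : Fin 3) 1 (1 : Matrix (Fin n × Fin n) (Fin n × Fin n) ℂ) = 1 := by
  ext f g
  rw [lift2_01, Matrix.one_apply, Matrix.one_apply]
  simp only [Prod.mk.injEq, hfh3 f g]
  split_ifs <;> simp_all

lemma lift2_one02 {n : ℕ} :
    lift2 (0 : Fin 3) 2 (1 : Matrix (Fin n × Fin n) (Fin n × Fin n) ℂ) = 1 := by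
  ext f g
  rw [lift2_02, Matrix.one_apply, Matrix.one_apply]
  simp only [Prod.mk.injEq, hfh3 f g]
  split_ifs <;> simp_all

lemma lift2_one12 {n : ℕ} :
    lift2 (1 : Fin 3) 2 (1 : Matrix (Fin n × Fin n) (Fin n × Fin n) ℂ) = 1 := by
  ext f g
  rw [lift2_12, Matrix.one_apply, Matrix.one_apply]
  simp only [Prod.mk.injEq, hfh3 f g]
  split_ifs <;> simp_all

/-- `R̃₁₂(x+1) R̃₁₃(x) R₂₃(1) = (1 − (P̃₁₂ + P̃₁₃) x⁻¹)(1 − P₂₃)` on `(ℂⁿ)^{⊗3}`. -/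
theorem stmt7 (n : ℕ) (hn : 1 ≤ n) (G : Matrix (Fin n) (Fin n) ℂ)
    (hG : IsUnit G.det) (hform : Gᵀ = G ∨ Gᵀ = -G)
    (x : ℂ) (hx : x ≠ 0) (hx' : x ≠ -1) :
    lift2 (0 : Fin 3) 1 (RtilM n G (x + 1)) * lift2 (0 : Fin 3) 2 (RtilM n G x) *
      lift2 (1 : Fin 3) 2 (Rm n 1)
  = (1 - x⁻¹ • (lift2 (0 : Fin 3) 1 (PtilM n G) + lift2 (0 : Fin 3) 2 (PtilM n G))) *
      (1 - lift2 (1 : Fin 3) 2 (flipP n)) := by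
  have hx1 : x + 1 ≠ 0 := fun h => hx' (by linear_combination h)
  rw [RtilM, RtilM, Rm, lift2_sub, lift2_sub, lift2_sub, lift2_smul, lift2_smul, lift2_smul,
    lift2_one01, lift2_one02, lift2_one12, inv_one, one_smul]
  set A := lift2 (0 : Fin 3) 1 (PtilM n G) with hA
  set B := lift2 (0 : Fin 3) 2 (PtilM n G) with hB
  set C := lift2 (1 : Fin 3) 2 (flipP n) with hC
  have hAB : A * C = A * B := by
    ext f h; rw [hA, hB, hC, ACapp, ABapp G hG]
  have hCC : C * C = 1 := CC
  have h2 : A * B * C = A := by rw [← hAB, mul_assoc, hCC, mul_one]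
  simp only [mul_sub, sub_mul, mul_one, one_mul, smul_mul_assoc, mul_smul_comm, smul_smul,
    add_mul, smul_add]
  rw [h2, ← hAB]
  match_scalars <;> (field_simp; try ring)
end
end

section
/- Let 1 ≤ k ≤ n, t ∈ ℂ, and let x ∈ ℂ satisfy x ∉ {t, t+1, …, t+k−1}. Then, labelling the tensor factors of (ℂⁿ)^{⊗(k+1)} by 0, 1, …, k, one has R̄₀₁(t+k−1−x) R̄₀₂(t+k−2−x) ⋯ R̄₀k(t−x) ∘ (1 ⊗ A_k) = (1 + (P̄₀₁ + ⋯ + P̄₀k)(x−t)⁻¹) ∘ (1 ⊗ A_k) as operators on (ℂⁿ)^{⊗(k+1)}; that is, the two operators agree on ℂⁿ ⊗ Λ^k(ℂⁿ). -/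
noncomputable section
open scoped Kronecker
open Matrix

/-- The operator `P_σ` permuting the tensor factors of `(ℂⁿ)^{⊗k}` according to `σ`. -/
def permMat (n k : ℕ) (σ : Equiv.Perm (Fin k)) : TMat (Fin k) n :=
  fun f g => if f ∘ σ = g then 1 else 0

/-- The normalized antisymmetrizer `A_k = (1/k!) Σ_σ sgn(σ) P_σ` on `(ℂⁿ)^{⊗k}`. -/
def antisym (n k : ℕ) : TMat (Fin k) n :=
  (k.factorial : ℂ)⁻¹ • ∑ σ : Equiv.Perm (Fin k), (((Equiv.Perm.sign σ : ℤ) : ℂ)) • permMat n k σ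

/-- Extend an operator on `(ℂⁿ)^{⊗k}` to `(ℂⁿ)^{⊗(k+1)}`, acting as the
identity in the `0`-th factor. -/
def oneT (n k : ℕ) (M : TMat (Fin k) n) : TMat (Fin (k + 1)) n :=
  fun f g => (if f 0 = g 0 then 1 else 0) * M (fun p => f p.succ) (fun p => g p.succ)

namespace Stmt9Aux

variable {n k : ℕ}

lemma PbarM_apply (a b c d : Fin n) :
    PbarM n (a, b) (c, d) = (if a = b then (1:ℂ) else 0) * (if c = d then 1 else 0) := by
  classical
  simp only [PbarM, Matrix.sum_apply, Matrix.kroneckerMap_apply, matE,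
    Matrix.single, Matrix.of_apply]
  simp [Finset.sum_ite_eq, ite_and]
  aesop

/-- `updf f a c` : set positions `0` and `a.succ` of `f` to `c`. -/
def updf (f : Fin (k+1) → Fin n) (a : Fin k) (c : Fin n) : Fin (k+1) → Fin n :=
  fun p => if p = 0 ∨ p = a.succ then c else f p

lemma updf_zero (f : Fin (k+1) → Fin n) (a : Fin k) (c : Fin n) : updf f a c 0 = c := by
  simp [updf]

lemma updf_succ_self (f : Fin (k+1) → Fin n) (a : Fin k) (c : Fin n) :
    updf f a c a.succ = c := by simp [updf]

lemma updf_injective (f : Fin (k+1) → Fin n) (a : Fin k) :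
    Function.Injective (updf f a) := by
  intro c d h
  have := congrArg (fun u => u 0) h
  simpa [updf] using this

lemma lift2P_mul_apply (a : Fin k) (X : TMat (Fin (k+1)) n) (f g : Fin (k+1) → Fin n) :
    (lift2 (0 : Fin (k+1)) a.succ (PbarM n) * X) f g
      = (if f 0 = f a.succ then 1 else 0) * ∑ c : Fin n, X (updf f a c) g := by
  classical
  have key : ∀ c : Fin n, lift2 (0 : Fin (k+1)) a.succ (PbarM n) f (updf f a c)
      = (if f 0 = f a.succ then 1 else 0) := by
    intro c
    simp only [lift2, PbarM_apply, updf_zero, updf_succ_self]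
    have hpr : ∀ p : Fin (k+1), (if p = 0 ∨ p = a.succ then (1:ℂ)
        else if f p = updf f a c p then 1 else 0) = 1 := by
      intro p
      by_cases hp : p = 0 ∨ p = a.succ
      · simp [hp]
      · simp [hp, updf]
    simp [hpr]
  have vanish : ∀ h : Fin (k+1) → Fin n, h ∉ Finset.univ.image (updf f a) →
      lift2 (0 : Fin (k+1)) a.succ (PbarM n) f h = 0 := by
    intro h hh
    simp only [Finset.mem_image, Finset.mem_univ, true_and] at hh
    have hne : h ≠ updf f a (h 0) := fun e => hh ⟨h 0, e.symm⟩
    by_cases h01 : h 0 = h a.succ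
    · have hex : ∃ p : Fin (k+1), ¬(p = 0 ∨ p = a.succ) ∧ f p ≠ h p := by
        by_contra hcon
        push_neg at hcon
        apply hne
        funext p
        by_cases hp : p = 0 ∨ p = a.succ
        · rcases hp with rfl | rfl
          · simp [updf]
          · simp [updf, h01]
        · have h2 := hcon p
          have hfp : f p = h p := by tauto
          simp [updf, hp, ← hfp]
      obtain ⟨p, hp1, hp2⟩ := hex
      rw [lift2]
      apply mul_eq_zero_of_right
      exact Finset.prod_eq_zero (Finset.mem_univ p) (by simp [hp1, hp2])
    · rw [lift2]
      apply mul_eq_zero_of_left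
      rw [PbarM_apply]
      simp [h01]
  rw [Matrix.mul_apply]
  calc (∑ h : Fin (k+1) → Fin n, lift2 (0 : Fin (k+1)) a.succ (PbarM n) f h * X h g)
      = ∑ h ∈ Finset.univ.image (updf f a),
          lift2 (0 : Fin (k+1)) a.succ (PbarM n) f h * X h g := by
        refine (Finset.sum_subset (Finset.subset_univ _) ?_).symm
        intro h _ hh
        rw [vanish h hh, zero_mul]
    _ = ∑ c : Fin n, lift2 (0 : Fin (k+1)) a.succ (PbarM n) f (updf f a c) * X (updf f a c) g :=
        Finset.sum_image (by intro c _ d _ hcd; exact updf_injective f a hcd)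
    _ = (if f 0 = f a.succ then 1 else 0) * ∑ c : Fin n, X (updf f a c) g := by
        simp only [key, Finset.mul_sum]

lemma antisym_comp_perm (τ : Equiv.Perm (Fin k)) (h g : Fin k → Fin n) :
    antisym n k (h ∘ τ) g = (((Equiv.Perm.sign τ : ℤ) : ℂ)) * antisym n k h g := by
  classical
  simp only [antisym, Matrix.smul_apply, Matrix.sum_apply, smul_eq_mul, Finset.mul_sum]
  conv_lhs => rw [← Equiv.sum_comp (Equiv.mulLeft τ⁻¹) (fun σ => (k.factorial : ℂ)⁻¹ *
      ((((Equiv.Perm.sign σ : ℤ) : ℂ)) * permMat n k σ (h ∘ τ) g))]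
  apply Finset.sum_congr rfl
  intro σ _
  simp only [Equiv.coe_mulLeft]
  have h1 : permMat n k (τ⁻¹ * σ) (h ∘ τ) g = permMat n k σ h g := by
    have e : (h ∘ τ) ∘ ⇑(τ⁻¹ * σ) = h ∘ ⇑σ := by
      funext p; simp [Function.comp, Equiv.Perm.mul_apply]
    simp only [permMat, e]
  rw [h1]
  have h2 : (((Equiv.Perm.sign (τ⁻¹ * σ) : ℤ) : ℂ))
      = (((Equiv.Perm.sign τ : ℤ) : ℂ)) * (((Equiv.Perm.sign σ : ℤ) : ℂ)) := by
    rw [_root_.map_mul]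
    push_cast [Units.val_mul]
    rw [Equiv.Perm.sign_inv]
  rw [h2]
  ring

lemma updf_apply_ne (f : Fin (k+1) → Fin n) (a : Fin k) (c : Fin n) (p : Fin (k+1))
    (h0 : p ≠ 0) (ha : p ≠ a.succ) : updf f a c p = f p := by
  simp [updf, h0, ha]

lemma updf_comp_succ (f : Fin (k+1) → Fin n) (a : Fin k) (c : Fin n) :
    (fun p : Fin k => updf f a c p.succ) = Function.update (fun p : Fin k => f p.succ) a c := by
  funext p
  by_cases hp : p = a
  · subst hp; simp [updf]
  · simp [updf, Fin.succ_ne_zero, Function.update_apply, hp,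
      fun h => hp (Fin.succ_injective _ h)]

lemma key_anticomm (a b : Fin k) (hab : a ≠ b) :
    lift2 (0 : Fin (k+1)) a.succ (PbarM n) *
        (lift2 (0 : Fin (k+1)) b.succ (PbarM n) * oneT n k (antisym n k))
      = -(lift2 (0 : Fin (k+1)) a.succ (PbarM n) * oneT n k (antisym n k)) := by
  classical
  ext f g
  rw [Matrix.neg_apply, lift2P_mul_apply, lift2P_mul_apply]
  simp only [lift2P_mul_apply]
  set f' : Fin k → Fin n := fun p => f p.succ with hf'
  set g' : Fin k → Fin n := fun p => g p.succ with hg'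
  have hbs0 : (b.succ : Fin (k+1)) ≠ 0 := Fin.succ_ne_zero b
  have hbsa : (b.succ : Fin (k+1)) ≠ a.succ := fun h => hab (Fin.succ_injective _ h).symm
  -- simplify LHS inner sums
  have lhs_inner : ∀ c : Fin n,
      (if updf f a c 0 = updf f a c b.succ then (1:ℂ) else 0) *
        ∑ d : Fin n, oneT n k (antisym n k) (updf (updf f a c) b d) g
      = (if c = f b.succ then (1:ℂ) else 0) *
        ∑ d : Fin n, (if d = g 0 then (1:ℂ) else 0) *
          antisym n k (Function.update (Function.update f' a c) b d) g' := by
    intro c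
    rw [updf_zero, updf_apply_ne f a c b.succ hbs0 hbsa]
    congr 1
    apply Finset.sum_congr rfl
    intro d _
    rw [oneT, updf_zero]
    congr 1
    rw [updf_comp_succ, updf_comp_succ]
  simp only [lhs_inner]
  rw [Finset.sum_congr rfl (fun c _ => by
    rw [Finset.sum_congr rfl (fun d _ => by rw [ite_mul, one_mul, zero_mul]),
      Finset.sum_ite_eq' Finset.univ (g 0)
        (fun d => antisym n k (Function.update (Function.update f' a c) b d) g'),
      if_pos (Finset.mem_univ _)])]
  simp only [ite_mul, one_mul, zero_mul]
  rw [Finset.sum_ite_eq' Finset.univ (f b.succ)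
      (fun c => antisym n k (Function.update (Function.update f' a c) b (g 0)) g'),
    if_pos (Finset.mem_univ _)]
  -- RHS inner sum
  have rhs_inner : ∀ c : Fin n, oneT n k (antisym n k) (updf f a c) g
      = (if c = g 0 then (1:ℂ) else 0) * antisym n k (Function.update f' a c) g' := by
    intro c
    rw [oneT, updf_zero]
    congr 1
    rw [updf_comp_succ]
  simp only [rhs_inner, ite_mul, one_mul, zero_mul]
  rw [Finset.sum_ite_eq' Finset.univ (g 0)
      (fun c => antisym n k (Function.update f' a c) g'), if_pos (Finset.mem_univ _)]
  -- now the antisymmetry step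
  have hcomp : (Function.update (Function.update f' a (f b.succ)) b (g 0)) ∘ (Equiv.swap a b)
      = Function.update f' a (g 0) := by
    funext p
    by_cases hpa : p = a
    · subst hpa
      simp [Equiv.swap_apply_left, Function.update_apply, hab]
    · by_cases hpb : p = b
      · subst hpb
        simp [Equiv.swap_apply_right, Function.update_apply, hab, Ne.symm hab, hf']
      · simp [Equiv.swap_apply_of_ne_of_ne hpa hpb, Function.update_apply, hpa, hpb]
  have hsign := antisym_comp_perm (n := n) (Equiv.swap a b)
      (Function.update (Function.update f' a (f b.succ)) b (g 0)) g'
  rw [hcomp, Equiv.Perm.sign_swap hab] at hsign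
  have hb' : f b.succ = f' b := rfl
  rw [hsign]
  push_cast
  split_ifs <;> ring

lemma lift2_one (a : Fin k) :
    lift2 (0 : Fin (k+1)) a.succ (1 : Matrix (Fin n × Fin n) (Fin n × Fin n) ℂ) = 1 := by
  classical
  ext f g
  simp only [lift2, Matrix.one_apply]
  by_cases hfg : f = g
  · subst hfg
    simp
  · rw [if_neg hfg]
    obtain ⟨p, hp⟩ : ∃ p, f p ≠ g p := by
      by_contra hcon
      push_neg at hcon
      exact hfg (funext hcon)
    by_cases hp0 : p = 0 ∨ p = a.succ
    · apply mul_eq_zero_of_left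
      have hne : (f 0, f a.succ) ≠ (g 0, g a.succ) := by
        rcases hp0 with rfl | rfl
        · exact fun h => hp (congrArg Prod.fst h)
        · exact fun h => hp (congrArg Prod.snd h)
      simp [hne]
    · apply mul_eq_zero_of_right
      exact Finset.prod_eq_zero (Finset.mem_univ p) (by simp [hp0, hp])

lemma lift2_sub {ι : Type} [Fintype ι] [DecidableEq ι] (i j : ι)
    (Z W : Matrix (Fin n × Fin n) (Fin n × Fin n) ℂ) :
    lift2 i j (Z - W) = lift2 i j Z - lift2 i j W := by
  ext f g
  simp [lift2, Matrix.sub_apply, sub_mul]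

lemma lift2_smul {ι : Type} [Fintype ι] [DecidableEq ι] (i j : ι) (c : ℂ)
    (Z : Matrix (Fin n × Fin n) (Fin n × Fin n) ℂ) :
    lift2 i j (c • Z) = c • lift2 i j Z := by
  ext f g
  simp [lift2, Matrix.smul_apply, mul_assoc]

lemma lift2_Rbar (a : Fin k) (c : ℂ) :
    lift2 (0 : Fin (k+1)) a.succ (RbarM n c)
      = 1 - c⁻¹ • lift2 (0 : Fin (k+1)) a.succ (PbarM n) := by
  rw [RbarM, lift2_sub, lift2_smul, lift2_one]

open Fin.NatCast in
lemma natCast_fin_succ (j : ℕ) (hj : j < k) :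
    ((j.succ : ℕ) : Fin (k+1)) = (⟨j, hj⟩ : Fin k).succ := by
  ext
  rw [Fin.val_natCast, Nat.mod_eq_of_lt (by omega)]
  rfl

open Fin.NatCast in
def RJ (n k : ℕ) (t x : ℂ) (j : ℕ) : TMat (Fin (k+1)) n :=
  lift2 (0 : Fin (k + 1)) j.succ (RbarM n (t + (k : ℂ) - 1 - ((j : ℕ) : ℂ) - x))

open Fin.NatCast in
def QJ (n k : ℕ) (j : ℕ) : TMat (Fin (k+1)) n :=
  lift2 (0 : Fin (k + 1)) j.succ (PbarM n)

lemma QJ_eq (j : ℕ) (hj : j < k) :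
    QJ n k j = lift2 (0 : Fin (k + 1)) (⟨j, hj⟩ : Fin k).succ (PbarM n) := by
  rw [QJ, natCast_fin_succ j hj]

lemma RJ_eq (t x : ℂ) (j : ℕ) (hj : j < k) :
    RJ n k t x j = lift2 (0 : Fin (k + 1)) (⟨j, hj⟩ : Fin k).succ
      (RbarM n (t + (k : ℂ) - 1 - ((j : ℕ) : ℂ) - x)) := by
  rw [RJ, natCast_fin_succ j hj]

lemma main_ind (n k : ℕ) (hk : 1 ≤ k) (t x : ℂ)
    (hx : ∀ i : Fin k, x ≠ t + ((i : ℕ) : ℂ)) :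
    ∀ d : ℕ, d ≤ k →
    (((List.range k).drop (k - d)).map (RJ n k t x)).prod * oneT n k (antisym n k)
    = oneT n k (antisym n k) + (x - t)⁻¹ •
        (((List.range k).drop (k - d)).map (fun j => QJ n k j * oneT n k (antisym n k))).sum := by
  have hxt : x - t ≠ 0 := by
    have := hx ⟨0, hk⟩
    intro h
    apply this
    push_cast
    linear_combination h
  intro d
  induction d with
  | zero =>
    intro _
    have hnil : (List.range k).drop (k - 0) = [] := by
      apply List.drop_eq_nil_of_le
      simp
    rw [hnil]
    simp
  | succ d ih =>
    intro hdk
    have hd : d ≤ k := Nat.le_of_succ_le hdk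
    have hm : k - (d+1) < k := by omega
    have hkd : k - d = (k - (d+1)) + 1 := by omega
    have hdrop : (List.range k).drop (k - (d+1))
        = (k - (d+1)) :: (List.range k).drop ((k - (d+1)) + 1) := by
      rw [List.drop_eq_getElem_cons (by simpa using hm)]
      congr 1
      simp
    have ih' := ih hd
    rw [hkd] at ih'
    rw [hdrop, List.map_cons, List.prod_cons, List.map_cons, List.sum_cons, mul_assoc, ih']
    set A := oneT n k (antisym n k) with hA
    set Qm := QJ n k (k - (d+1)) with hQm
    set T := (((List.range k).drop ((k - (d+1)) + 1)).map (fun j => QJ n k j * A)).sum with hT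
    have hmem : ∀ j : ℕ, j ∈ (List.range k).drop ((k - (d+1)) + 1) →
        j < k ∧ k - (d+1) < j := by
      intro j hj
      rw [List.mem_iff_getElem] at hj
      obtain ⟨i, hi, hji⟩ := hj
      rw [List.getElem_drop, List.getElem_range] at hji
      rw [List.length_drop, List.length_range] at hi
      omega
    have hanti : ∀ j : ℕ, j < k → k - (d+1) ≠ j → Qm * (QJ n k j * A) = -(Qm * A) := by
      intro j hj hne
      rw [hQm, hA, QJ_eq (k - (d+1)) hm, QJ_eq j hj]
      have hab : (⟨k - (d+1), hm⟩ : Fin k) ≠ ⟨j, hj⟩ := by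
        simp only [ne_eq, Fin.mk.injEq]
        omega
      exact key_anticomm _ _ hab
    have hmul : Qm * T = ((List.range k).drop ((k - (d+1)) + 1)).length • (-(Qm * A)) := by
      rw [hT, ← List.sum_map_mul_left]
      have heq : ((List.range k).drop ((k - (d+1)) + 1)).map
            (fun j => Qm * (QJ n k j * A))
          = ((List.range k).drop ((k - (d+1)) + 1)).map (fun _ => -(Qm * A)) := by
        apply List.map_congr_left
        intro j hj
        obtain ⟨hj1, hj2⟩ := hmem j hj
        exact hanti j hj1 (by omega)
      rw [heq, List.map_const', List.sum_replicate]
    have hlen : ((List.range k).drop ((k - (d+1)) + 1)).length = d := by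
      rw [List.length_drop, List.length_range]
      omega
    have hknat : k = (k - (d+1)) + 1 + d := by omega
    have hkc2 : (k : ℂ) = ((k - (d+1) : ℕ) : ℂ) + 1 + (d : ℂ) := by
      conv_lhs => rw [hknat]
      push_cast
      ring
    have hc' : t + (d : ℂ) - x ≠ 0 := by
      have hxd := hx ⟨d, by omega⟩
      intro h
      apply hxd
      linear_combination -h
    have hc : (t + (k : ℂ) - 1 - ((k - (d+1) : ℕ) : ℂ) - x) ≠ 0 := by
      rw [hkc2]
      intro h
      apply hc'
      linear_combination h
    rw [RJ_eq t x (k - (d+1)) hm, lift2_Rbar, ← QJ_eq (k - (d+1)) hm, ← hQm]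
    rw [sub_mul, one_mul, Matrix.smul_mul, mul_add, Matrix.mul_smul,
      hmul, hlen, ← Nat.cast_smul_eq_nsmul ℂ d]
    rw [hkc2] at hc ⊢
    match_scalars
    · ring
    · field_simp
    · have hE : -((d:ℂ) * t) + (d:ℂ) * x + t * x * 2 + (-t ^ 2 - x ^ 2) ≠ 0 := by
        intro h
        exact (mul_ne_zero hxt hc') (by linear_combination h)
      field_simp [hE]
      rw [← mul_inv_cancel₀ hE]
      ring

end Stmt9Aux

/-- `R̄₀₁(t+k−1−x) ⋯ R̄₀k(t−x) ∘ (1 ⊗ A_k) = (1 + (P̄₀₁ + ⋯ + P̄₀k)(x−t)⁻¹) ∘ (1 ⊗ A_k)`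
on `(ℂⁿ)^{⊗(k+1)}` (factors labelled `0, 1, …, k`), for `x ∉ {t, …, t+k−1}`. -/
theorem stmt9 (n k : ℕ) (hk : 1 ≤ k) (hkn : k ≤ n) (t x : ℂ)
    (hx : ∀ i : Fin k, x ≠ t + ((i : ℕ) : ℂ)) :
    ((List.finRange k).map (fun (j : Fin k) =>
        lift2 (0 : Fin (k + 1)) j.succ (RbarM n (t + (k : ℂ) - 1 - ((j : ℕ) : ℂ) - x)))).prod *
      oneT n k (antisym n k)
  = (1 + (x - t)⁻¹ • ∑ j : Fin k, lift2 (0 : Fin (k + 1)) j.succ (PbarM n)) *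
      oneT n k (antisym n k) := by

  have e1 : (List.finRange k).map (fun (j : Fin k) => lift2 (0 : Fin (k + 1)) j.succ
        (RbarM n (t + (k : ℂ) - 1 - ((j : ℕ) : ℂ) - x))) = (List.range k).map (Stmt9Aux.RJ n k t x) := by
    have e2' : List.range k = (List.finRange k).map Fin.val := by
      apply List.ext_getElem <;> simp
    rw [e2', List.map_map]
    apply List.map_congr_left
    intro j _
    simp only [Function.comp_apply]
    rw [Stmt9Aux.RJ_eq t x j j.isLt]
  rw [e1]
  have h := Stmt9Aux.main_ind n k hk t x hx k le_rfl
  rw [Nat.sub_self, List.drop_zero] at h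
  rw [h]
  have e2 : (List.range k) = (List.finRange k).map Fin.val := by
    apply List.ext_getElem <;> simp
  rw [e2, List.map_map, ← Fin.sum_univ_def]
  have e3 : ∀ a : Fin k, Stmt9Aux.QJ n k ((a : ℕ)) * oneT n k (antisym n k)
      = lift2 (0 : Fin (k + 1)) a.succ (PbarM n) * oneT n k (antisym n k) := by
    intro a
    rw [Stmt9Aux.QJ_eq _ a.isLt]
  simp only [Function.comp_def, e3]
  rw [add_mul, one_mul, Matrix.smul_mul, Finset.sum_mul]
end
end

section
/- Suppose μ₁, …, μ_m ∈ ℂ satisfy μ_a − μ_b ∉ ℤ for all a ≠ b, and put λ_a = μ_a + ν_a. Then the vector φ_{ν₁} ⊗ ⋯ ⊗ φ_{ν_m} ∈ (ℂⁿ)^{⊗N} is an eigenvector of B(μ) with eigenvalue ∏_{1 ≤ a < b ≤ m} c_{ab}, where c_{ab} = (λ_a − λ_b + ρ_a − ρ_b + ν_b)/(μ_a − μ_b + ρ_a − ρ_b) if ν_a ≤ ν_b, and c_{ab} = (λ_a − λ_b + ρ_a − ρ_b + ν_b)/(λ_a − λ_b + ρ_a − ρ_b) if ν_a ≥ ν_b.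 -/
noncomputable section
open scoped Kronecker
open Matrix

/-- Positions `1, …, N` of the sequence split into consecutive segments of
lengths `ν₁, …, ν_m`: the position `⟨a, i⟩` is the `(i+1)`-st element of the
`(a+1)`-st segment; the sequence order is the lexicographic order. -/
abbrev Pos (m : ℕ) (ν : Fin m → ℕ) : Type := (a : Fin m) × Fin (ν a)

/-- The positions `1, …, N` in their sequence order. -/
def posList (m : ℕ) (ν : Fin m → ℕ) : List (Pos m ν) :=
  (List.finRange m).flatMap (fun a => (List.finRange (ν a)).map (fun i => ⟨a, i⟩))

/-- The sequence `1', …, N'`: segments in reversed order, order within each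
segment unchanged. -/
def posListRev (m : ℕ) (ν : Fin m → ℕ) : List (Pos m ν) :=
  (List.finRange m).reverse.flatMap (fun a => (List.finRange (ν a)).map (fun i => ⟨a, i⟩))

/-- The spectral parameter `x_p = μ_a + ρ_a + 1/2 + ν_a − i` for `p` the `i`-th
element (1-based) of the `a`-th segment. -/
def xPos (m : ℕ) (ν : Fin m → ℕ) (μ ρ : Fin m → ℂ) (p : Pos m ν) : ℂ :=
  μ p.1 + ρ p.1 + 1/2 + (ν p.1 : ℂ) - ((p.2 : ℕ) : ℂ) - 1

/-- The pairs `(p, q)`, `p < q` in different segments, ordered so that `(p,q)`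
precedes `(r,s)` if `p < r`, or `p = r` and `q` precedes `s` in the sequence
`1'', …, N''` (segments in order, reversed within each segment). -/
def pairsB (m : ℕ) (ν : Fin m → ℕ) : List (Pos m ν × Pos m ν) :=
  (posList m ν).flatMap (fun p =>
    ((List.finRange m).filter (fun b => decide (p.1 < b))).flatMap (fun b =>
      ((List.finRange (ν b)).reverse.map (fun j => (p, (⟨b, j⟩ : Pos m ν))))))

/-- `B(μ) = ∏→_{(p,q)} R_{pq}(x_q − x_p)`, the ordered product (factors
multiplied left to right) over pairs `p < q` in different segments. -/
def Bop (n m : ℕ) (ν : Fin m → ℕ) (μ ρ : Fin m → ℂ) : TMat (Pos m ν) n :=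
  ((pairsB m ν).map (fun pq =>
    lift2 pq.1 pq.2 (Rm n (xPos m ν μ ρ pq.2 - xPos m ν μ ρ pq.1)))).prod

/-- The vector `φ_{ν₁} ⊗ ⋯ ⊗ φ_{ν_m}` where `φ_k = A_k(e₁ ⊗ ⋯ ⊗ e_k)`. -/
def phiSeg (n m : ℕ) (hn : 0 < n) (ν : Fin m → ℕ) : (Pos m ν → Fin n) → ℂ :=
  fun g => ∏ a : Fin m, antisym n (ν a) (fun i => g ⟨a, i⟩)
    (fun i => ⟨(i : ℕ) % n, Nat.mod_lt _ hn⟩)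

/-- Labels of the half-sum of positive roots of `gl_m`: `ρ_a = m/2 − a + 1/2`
(`a` here 0-based). -/
def rhoGL (m : ℕ) : Fin m → ℂ := fun a => (m : ℂ) / 2 - ((a : ℕ) : ℂ) - 1/2

namespace NT
variable {n : ℕ} {ι : Type} [Fintype ι] [DecidableEq ι]

lemma flipP_apply (a1 a2 b1 b2 : Fin n) :
    flipP n (a1, a2) (b1, b2) = if a1 = b2 ∧ a2 = b1 then 1 else 0 := by
  have key : ∀ i j : Fin n,
      (matE n i j ⊗ₖ matE n j i) (a1, a2) (b1, b2)
        = if j = a2 then (if i = b2 then (if a1 = b2 ∧ a2 = b1 then (1:ℂ) else 0) else 0) else 0 := by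
    intro i j
    simp only [Matrix.kroneckerMap_apply, matE, Matrix.single, Matrix.of_apply]
    split_ifs <;> simp_all <;> aesop
  simp only [flipP, Matrix.sum_apply, key]
  have inner : ∀ x : Fin n, (∑ x_1 : Fin n, if x_1 = a2 then (if x = b2 then (if a1 = b2 ∧ a2 = b1 then (1:ℂ) else 0) else 0) else 0) = (if x = b2 then (if a1 = b2 ∧ a2 = b1 then (1:ℂ) else 0) else 0) := by
    intro x
    rw [Finset.sum_ite_eq' Finset.univ a2]
    simp
  simp only [inner]
  rw [Finset.sum_ite_eq' Finset.univ b2]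
  simp

/-- swap-the-values operation on vectors -/
def sw (p q : ι) (v : (ι → Fin n) → ℂ) : (ι → Fin n) → ℂ :=
  fun f => v (f ∘ Equiv.swap p q)

lemma lift2_one (p q : ι) :
    (lift2 p q (1 : Matrix (Fin n × Fin n) (Fin n × Fin n) ℂ) : TMat ι n) = 1 := by
  ext f g
  simp only [lift2, Matrix.one_apply, Prod.mk.injEq]
  by_cases h : f = g
  · subst h; simp
  · rw [if_neg h]
    obtain ⟨r, hr⟩ := Function.ne_iff.mp h
    rcases eq_or_ne r p with rfl | hrp
    · rw [if_neg (by tauto), zero_mul]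
    · rcases eq_or_ne r q with rfl | hrq
      · rw [if_neg (by tauto), zero_mul]
      · rw [Finset.prod_eq_zero (Finset.mem_univ r), mul_zero]
        rw [if_neg (by tauto), if_neg hr]

lemma lift2_flip_apply (p q : ι) (hpq : p ≠ q) (f g : ι → Fin n) :
    (lift2 p q (flipP n) : TMat ι n) f g = if g = f ∘ Equiv.swap p q then 1 else 0 := by
  simp only [lift2, flipP_apply]
  by_cases h : g = f ∘ Equiv.swap p q
  · rw [if_pos h]; subst h
    simp only [Function.comp_apply, Equiv.swap_apply_left, Equiv.swap_apply_right, and_self,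
      if_true]
    rw [one_mul]
    apply Finset.prod_eq_one
    intro r _
    by_cases hr : r = p ∨ r = q
    · simp [hr]
    · push_neg at hr
      simp [hr.1, hr.2, Equiv.swap_apply_of_ne_of_ne hr.1 hr.2]
  · rw [if_neg h]
    obtain ⟨r, hr⟩ := Function.ne_iff.mp h
    rcases eq_or_ne r p with rfl | hrp
    · simp only [Function.comp_apply, Equiv.swap_apply_left] at hr
      rw [if_neg (by rintro ⟨-, h2⟩; exact hr h2.symm), zero_mul]
    · rcases eq_or_ne r q with rfl | hrq
      · simp only [Function.comp_apply, Equiv.swap_apply_right] at hr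
        rw [if_neg (by rintro ⟨h1, -⟩; exact hr h1.symm), zero_mul]
      · rw [Finset.prod_eq_zero (Finset.mem_univ r), mul_zero]
        simp only [Function.comp_apply, Equiv.swap_apply_of_ne_of_ne hrp hrq] at hr
        rw [if_neg (by tauto), if_neg (by tauto)]

lemma mulVec_lift2_flip (p q : ι) (hpq : p ≠ q) (v : (ι → Fin n) → ℂ) :
    (lift2 p q (flipP n) : TMat ι n).mulVec v = sw p q v := by
  funext f
  simp only [Matrix.mulVec, dotProduct, lift2_flip_apply p q hpq]
  rw [Finset.sum_eq_single (f ∘ Equiv.swap p q)]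
  · simp [sw]
  · intro b _ hb; simp [hb]
  · intro h; exact absurd (Finset.mem_univ _) h

lemma lift2_Rm_eq (p q : ι) (x : ℂ) :
    (lift2 p q (Rm n x) : TMat ι n) = lift2 p q 1 - x⁻¹ • lift2 p q (flipP n) := by
  ext f g
  simp only [lift2, Rm, Matrix.sub_apply, Matrix.smul_apply, smul_eq_mul]
  ring

/-- the atomic action -/
def ract (x : ℂ) (p q : ι) (v : (ι → Fin n) → ℂ) : (ι → Fin n) → ℂ :=
  fun f => v f - x⁻¹ * v (f ∘ Equiv.swap p q)

lemma mulVec_lift2_Rm (p q : ι) (hpq : p ≠ q) (x : ℂ) (v : (ι → Fin n) → ℂ) :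
    (lift2 p q (Rm n x) : TMat ι n).mulVec v = ract x p q v := by
  rw [lift2_Rm_eq, Matrix.sub_mulVec, Matrix.smul_mulVec, lift2_one p q,
    Matrix.one_mulVec, mulVec_lift2_flip p q hpq]
  funext f
  simp [ract, sw]

lemma lift2_Rm_symm (p q : ι) (x : ℂ) :
    (lift2 p q (Rm n x) : TMat ι n) = lift2 q p (Rm n x) := by
  ext f g
  simp only [lift2, Rm, Matrix.sub_apply, Matrix.smul_apply, Matrix.one_apply, flipP_apply,
    Prod.mk.injEq, smul_eq_mul]
  have e1 : (if f p = g p ∧ f q = g q then (1:ℂ) else 0)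
      = (if f q = g q ∧ f p = g p then 1 else 0) := by
    by_cases hh : f p = g p ∧ f q = g q
    · rw [if_pos hh, if_pos ⟨hh.2, hh.1⟩]
    · rw [if_neg hh, if_neg (by tauto)]
  have e2 : (if f p = g q ∧ f q = g p then (1:ℂ) else 0)
      = (if f q = g p ∧ f p = g q then 1 else 0) := by
    by_cases hh : f p = g q ∧ f q = g p
    · rw [if_pos hh, if_pos ⟨hh.2, hh.1⟩]
    · rw [if_neg hh, if_neg (by tauto)]
  have hprod : ∏ r : ι, (if r = p ∨ r = q then (1:ℂ) else if f r = g r then 1 else 0)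
      = ∏ r : ι, (if r = q ∨ r = p then (1:ℂ) else if f r = g r then 1 else 0) :=
    Finset.prod_congr rfl (fun r _ => by
      by_cases hh : r = p ∨ r = q
      · rw [if_pos hh, if_pos (Or.symm hh)]
      · rw [if_neg hh, if_neg (fun hc : r = q ∨ r = p => hh (Or.symm hc))])
  rw [e1, e2, hprod]


/-! ### column application and the two core lemmas -/

def colApply (p : ι) : List ι → ℂ → ((ι → Fin n) → ℂ) → ((ι → Fin n) → ℂ)
  | [], _, v => v
  | q :: t, c, v => ract c p q (colApply p t (c+1) v)

lemma colApply_add (p : ι) (qs : List ι) (c : ℂ) (u w : (ι → Fin n) → ℂ) :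
    colApply p qs c (fun f => u f + w f)
      = fun f => colApply p qs c u f + colApply p qs c w f := by
  induction qs generalizing c with
  | nil => rfl
  | cons q t ih =>
    simp only [colApply, ih]
    funext f
    simp only [ract]
    ring

/-- antisymmetry of a vector with respect to a list of sites -/
def Anti (qs : List ι) (v : (ι → Fin n) → ℂ) : Prop :=
  ∀ q ∈ qs, ∀ q' ∈ qs, q ≠ q' → ∀ f : ι → Fin n, v (f ∘ Equiv.swap q q') = - v f

lemma list_sum_zero {α : Type*} {l : List α} {F : α → ℂ} (h : ∀ b ∈ l, F b = 0) :
    (l.map F).sum = 0 := by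
  induction l with
  | nil => simp
  | cons a t ih =>
    simp only [List.map_cons, List.sum_cons, h a (by simp),
      ih (fun b hb => h b (by simp [hb])), add_zero]

lemma list_sum_single {α : Type*} {l : List α} {F : α → ℂ} {a : α} (ha : a ∈ l)
    (hnd : l.Nodup) (h : ∀ b ∈ l, b ≠ a → F b = 0) : (l.map F).sum = F a := by
  induction l with
  | nil => simp at ha
  | cons x t ih =>
    rcases List.mem_cons.mp ha with rfl | hat
    · simp only [List.map_cons, List.sum_cons]
      rw [list_sum_zero (fun b hb => h b (by simp [hb]) (by
        rintro rfl; exact (List.nodup_cons.mp hnd).1 hb)), add_zero]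
    · simp only [List.map_cons, List.sum_cons]
      rw [ih hat (List.nodup_cons.mp hnd).2 (fun b hb hba => h b (by simp [hb]) hba),
        h x (by simp) (by rintro rfl; exact (List.nodup_cons.mp hnd).1 hat), zero_add]

lemma list_sum_neg {α : Type*} (l : List α) (F : α → ℂ) :
    (l.map (fun x => - F x)).sum = - (l.map F).sum := by
  induction l with
  | nil => simp
  | cons a t ih => simp [ih]; ring

/-- swapping two positions with equal values does nothing -/
lemma comp_swap_eq_self {f : ι → Fin n} {a b : ι} (h : f a = f b) :
    f ∘ Equiv.swap a b = f := by
  funext x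
  rcases eq_or_ne x a with rfl | hxa
  · simp [h.symm]
  · rcases eq_or_ne x b with rfl | hxb
    · simp [h]
    · simp [Equiv.swap_apply_of_ne_of_ne hxa hxb]

lemma zero_of_rep {qs : List ι} {v : (ι → Fin n) → ℂ} (hanti : Anti qs v)
    {q q' : ι} (hq : q ∈ qs) (hq' : q' ∈ qs) (hne : q ≠ q') {f : ι → Fin n}
    (hval : f q = f q') : v f = 0 := by
  have h1 := hanti q hq q' hq' hne f
  rw [comp_swap_eq_self hval] at h1
  have : (2:ℂ) * v f = 0 := by linear_combination h1
  simpa using this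

/-- the unconditional three-site swap identity -/
lemma G_comp {p q1 qb : ι} (h1 : q1 ≠ p) (hb : qb ≠ p) (h1b : q1 ≠ qb) (f : ι → Fin n) :
    (f ∘ Equiv.swap p q1) ∘ Equiv.swap p qb = (f ∘ Equiv.swap p qb) ∘ Equiv.swap q1 qb := by
  funext x
  simp only [Function.comp_apply, Equiv.swap_apply_def]
  split_ifs <;> simp_all

/-- the conditional three-site swap identity -/
lemma F3_comp {p q1 q0 : ι} (h1 : q1 ≠ p) (h0 : q0 ≠ p) (h10 : q1 ≠ q0) {f : ι → Fin n}
    (h : f q1 = f q0) :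
    f ∘ Equiv.swap p q1 = (f ∘ Equiv.swap p q0) ∘ Equiv.swap q1 q0 := by
  funext x
  simp only [Function.comp_apply, Equiv.swap_apply_def]
  split_ifs <;> simp_all

lemma outside_col (p : ι) (qs : List ι) (c : ℂ) (v : (ι → Fin n) → ℂ)
    (hnd : qs.Nodup) (hp : ∀ q ∈ qs, q ≠ p)
    (hc : ∀ i : ℕ, i ≤ qs.length → c + (i : ℂ) ≠ 0)
    (hanti : Anti qs v) :
    colApply p qs c v
      = fun f => v f - c⁻¹ * (qs.map (fun q => v (f ∘ Equiv.swap p q))).sum := by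
  induction qs generalizing c v with
  | nil => funext f; simp [colApply]
  | cons q1 t ih =>
    have hq1p : q1 ≠ p := hp q1 (by simp)
    have hq1t : q1 ∉ t := (List.nodup_cons.mp hnd).1
    have hndt : t.Nodup := (List.nodup_cons.mp hnd).2
    have hct : ∀ i : ℕ, i ≤ t.length → (c + 1) + (i : ℂ) ≠ 0 := by
      intro i hi
      have h := hc (i+1) (by simp [List.length_cons]; omega)
      intro hzero
      exact h (by push_cast; linear_combination hzero)
    have hantit : Anti t v := fun q hq q' hq' hne f =>
      hanti q (by simp [hq]) q' (by simp [hq']) hne f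
    have hc0 : c ≠ 0 := by simpa using hc 0 (by omega)
    have hc1 : c + 1 ≠ 0 := by simpa using hc 1 (by simp)
    show ract c p q1 (colApply p t (c+1) v) = _
    rw [ih (c+1) v hndt (fun q hq => hp q (by simp [hq])) hct hantit]
    funext f
    simp only [ract, List.map_cons, List.sum_cons]
    have hterm : ∀ q ∈ t, v ((f ∘ Equiv.swap p q1) ∘ Equiv.swap p q)
        = - v (f ∘ Equiv.swap p q) := by
      intro q hq
      have hqp : q ≠ p := hp q (by simp [hq])
      have h1q : q1 ≠ q := fun hh => hq1t (hh ▸ hq)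
      rw [G_comp hq1p hqp h1q f]
      exact hanti q1 (by simp) q (by simp [hq]) h1q (f ∘ Equiv.swap p q)
    rw [List.map_congr_left hterm, list_sum_neg]
    field_simp
    ring

lemma inside_col (p : ι) (qs : List ι) (c : ℂ) (v : (ι → Fin n) → ℂ)
    (hnd : qs.Nodup) (hp : ∀ q ∈ qs, q ≠ p)
    (hc : ∀ i : ℕ, i ≤ qs.length → c + (i : ℂ) ≠ 0)
    (hanti : Anti qs v)
    (hsupp : ∀ f, v f ≠ 0 → ∃ q ∈ qs, f q = f p) :
    colApply p qs c v = fun f => ((c-1)/c) * v f := by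
  induction qs generalizing c v with
  | nil =>
    have hv : ∀ f, v f = 0 := by
      intro f
      by_contra hf
      obtain ⟨q, hq, -⟩ := hsupp f hf
      simp at hq
    funext f
    simp [colApply, hv f]
  | cons q1 t ih =>
    have hq1p : q1 ≠ p := hp q1 (by simp)
    have hq1t : q1 ∉ t := (List.nodup_cons.mp hnd).1
    have hndt : t.Nodup := (List.nodup_cons.mp hnd).2
    have hct : ∀ i : ℕ, i ≤ t.length → (c + 1) + (i : ℂ) ≠ 0 := by
      intro i hi
      have h := hc (i+1) (by simp [List.length_cons]; omega)
      intro hzero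
      exact h (by push_cast; linear_combination hzero)
    have hc0 : c ≠ 0 := by simpa using hc 0 (by omega)
    have hc1 : c + 1 ≠ 0 := by simpa using hc 1 (by simp)
    set v1 : (ι → Fin n) → ℂ := fun f => if f q1 = f p then 0 else v f with hv1
    set v2 : (ι → Fin n) → ℂ := fun f => if f q1 = f p then v f else 0 with hv2
    have hsplit : ∀ g, v g = v1 g + v2 g := by
      intro g
      simp only [hv1, hv2]
      split_ifs <;> ring
    -- hypotheses for v1 and v2
    have hanti1 : Anti t v1 := by
      intro q hq q' hq' hne f
      have hq1q : q1 ≠ q := fun hh => hq1t (hh ▸ hq)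
      have hq1q' : q1 ≠ q' := fun hh => hq1t (hh ▸ hq')
      have hpq : p ≠ q := fun hh => (hp q (by simp [hq])) hh.symm
      have hpq' : p ≠ q' := fun hh => (hp q' (by simp [hq'])) hh.symm
      simp only [hv1, Function.comp_apply, Equiv.swap_apply_of_ne_of_ne hq1q hq1q',
        Equiv.swap_apply_of_ne_of_ne hpq hpq']
      rw [hanti q (by simp [hq]) q' (by simp [hq']) hne f]
      split_ifs <;> ring
    have hanti2 : Anti t v2 := by
      intro q hq q' hq' hne f
      have hq1q : q1 ≠ q := fun hh => hq1t (hh ▸ hq)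
      have hq1q' : q1 ≠ q' := fun hh => hq1t (hh ▸ hq')
      have hpq : p ≠ q := fun hh => (hp q (by simp [hq])) hh.symm
      have hpq' : p ≠ q' := fun hh => (hp q' (by simp [hq'])) hh.symm
      simp only [hv2, Function.comp_apply, Equiv.swap_apply_of_ne_of_ne hq1q hq1q',
        Equiv.swap_apply_of_ne_of_ne hpq hpq']
      rw [hanti q (by simp [hq]) q' (by simp [hq']) hne f]
      split_ifs <;> ring
    have hsupp1 : ∀ f, v1 f ≠ 0 → ∃ q ∈ t, f q = f p := by
      intro f hf
      by_cases hcond : f q1 = f p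
      · exact absurd (by simp [hv1, hcond]) hf
      · have hvf : v f ≠ 0 := by
          intro hz; exact hf (by simp [hv1, hcond, hz])
        obtain ⟨q, hq, hval⟩ := hsupp f hvf
        rcases List.mem_cons.mp hq with rfl | hqt
        · exact absurd hval hcond
        · exact ⟨q, hqt, hval⟩
    have h1 : colApply p t (c+1) v1 = fun f => ((c+1-1)/(c+1)) * v1 f :=
      ih (c+1) v1 hndt (fun q hq => hp q (by simp [hq])) hct hanti1 hsupp1
    have h2 : colApply p t (c+1) v2 = fun f => v2 f
        - (c+1)⁻¹ * (t.map (fun q => v2 (f ∘ Equiv.swap p q))).sum :=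
      outside_col p t (c+1) v2 hndt (fun q hq => hp q (by simp [hq])) hct hanti2
    have hcv : colApply p t (c+1) v
        = fun f => colApply p t (c+1) v1 f + colApply p t (c+1) v2 f := by
      conv_lhs => rw [show v = (fun f => v1 f + v2 f) from funext hsplit]
      exact colApply_add p t (c+1) v1 v2
    show ract c p q1 (colApply p t (c+1) v) = _
    rw [hcv]
    funext f
    simp only [ract, h1, h2]
    -- key pointwise facts
    have ha : v2 (f ∘ Equiv.swap p q1) = v2 f := by
      simp only [hv2, Function.comp_apply, Equiv.swap_apply_right, Equiv.swap_apply_left]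
      by_cases hcond : f q1 = f p
      · rw [if_pos hcond.symm, if_pos hcond, comp_swap_eq_self hcond.symm]
      · rw [if_neg (fun hh => hcond hh.symm), if_neg hcond]
    have hb : ∀ q ∈ t, v2 ((f ∘ Equiv.swap p q1) ∘ Equiv.swap p q)
        = -(if f q = f p then v f else 0) := by
      intro q hq
      have hq1q : q1 ≠ q := fun hh => hq1t (hh ▸ hq)
      have hqp : q ≠ p := hp q (by simp [hq])
      rw [G_comp hq1p hqp hq1q f]
      simp only [hv2, Function.comp_apply, Equiv.swap_apply_left,
        Equiv.swap_apply_of_ne_of_ne (fun hh : p = q1 => hq1p hh.symm) (fun hh : p = q => hqp hh.symm),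
        Equiv.swap_apply_right]
      -- condition: f p = f q ; branch v ((f∘swap p q) ∘ swap q1 q)
      by_cases hcond : f p = f q
      · rw [if_pos hcond,
          hanti q1 (by simp) q (by simp [hq]) hq1q (f ∘ Equiv.swap p q),
          comp_swap_eq_self hcond, if_pos hcond.symm]
      · rw [if_neg hcond, if_neg (fun hh => hcond hh.symm), neg_zero]
    have hsumU : (t.map (fun q => if f q = f p then v f else 0)).sum = v1 f := by
      by_cases hvf : v f = 0
      · rw [list_sum_zero (fun b _ => by simp [hvf])]
        simp [hv1, hvf]
      · by_cases hcond : f q1 = f p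
        · rw [list_sum_zero]
          · simp [hv1, hcond]
          · intro b hb'
            rw [if_neg]
            intro hcb
            exact hvf (zero_of_rep hanti (show b ∈ q1::t by simp [hb'])
              (show q1 ∈ q1::t by simp) (fun hh => hq1t (hh ▸ hb'))
              (hcb.trans hcond.symm))
        · obtain ⟨q0, hq0, hval0⟩ := hsupp f hvf
          rcases List.mem_cons.mp hq0 with rfl | hq0t
          · exact absurd hval0 hcond
          · rw [list_sum_single hq0t hndt ?_, if_pos hval0]
            · simp [hv1, hcond]
            · intro b hb' hbne
              rw [if_neg]
              intro hcb
              exact hvf (zero_of_rep hanti (by simp [hb']) (by simp [hq0t]) hbne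
                (hcb.trans hval0.symm))
    have hB : (t.map (fun q => v2 ((f ∘ Equiv.swap p q1) ∘ Equiv.swap p q))).sum
        = - v1 f := by
      rw [List.map_congr_left hb, list_sum_neg, hsumU]
    have hjunk : v1 (f ∘ Equiv.swap p q1)
        + (t.map (fun q => v2 (f ∘ Equiv.swap p q))).sum = 0 := by
      have e1 : v1 (f ∘ Equiv.swap p q1) = if f p = f q1 then 0 else v (f ∘ Equiv.swap p q1) := by
        simp only [hv1, Function.comp_apply, Equiv.swap_apply_right, Equiv.swap_apply_left]
      have e2 : ∀ q ∈ t, v2 (f ∘ Equiv.swap p q)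
          = if f q1 = f q then v (f ∘ Equiv.swap p q) else 0 := by
        intro q hq
        have hq1q : q1 ≠ q := fun hh => hq1t (hh ▸ hq)
        have hqp : q ≠ p := hp q (by simp [hq])
        simp only [hv2, Function.comp_apply, Equiv.swap_apply_left,
          Equiv.swap_apply_of_ne_of_ne hq1p hq1q]
      rw [e1, List.map_congr_left e2]
      by_cases hpq1 : f p = f q1
      · rw [if_pos hpq1, list_sum_zero, add_zero]
        intro b hb'
        by_cases hcb : f q1 = f b
        · rw [if_pos hcb]
          have h1b : q1 ≠ b := fun hh => hq1t (hh ▸ hb')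
          apply zero_of_rep hanti (show q1 ∈ q1::t by simp) (show b ∈ q1::t by simp [hb']) h1b
          show (f ∘ Equiv.swap p b) q1 = (f ∘ Equiv.swap p b) b
          simp only [Function.comp_apply, Equiv.swap_apply_right,
            Equiv.swap_apply_of_ne_of_ne hq1p h1b]
          exact hpq1.symm
        · rw [if_neg hcb]
      · rw [if_neg hpq1]
        by_cases hex : ∃ q0 ∈ t, f q0 = f q1
        · obtain ⟨q0, hq0t, hval⟩ := hex
          have hq1q0 : q1 ≠ q0 := fun hh => hq1t (hh ▸ hq0t)
          have hq0p : q0 ≠ p := hp q0 (by simp [hq0t])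
          have hfirst : v (f ∘ Equiv.swap p q1) = - v (f ∘ Equiv.swap p q0) := by
            rw [F3_comp hq1p hq0p hq1q0 hval.symm]
            exact hanti q1 (by simp) q0 (by simp [hq0t]) hq1q0 (f ∘ Equiv.swap p q0)
          rw [list_sum_single hq0t hndt ?_, if_pos hval.symm, hfirst]
          · ring
          · intro b hb' hbne
            by_cases hcb : f q1 = f b
            · rw [if_pos hcb]
              have h1b : q1 ≠ b := fun hh => hq1t (hh ▸ hb')
              apply zero_of_rep hanti (show q1 ∈ q1::t by simp)
                (show q0 ∈ q1::t by simp [hq0t]) hq1q0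
              show (f ∘ Equiv.swap p b) q1 = (f ∘ Equiv.swap p b) q0
              simp only [Function.comp_apply, Equiv.swap_apply_of_ne_of_ne hq1p h1b,
                Equiv.swap_apply_of_ne_of_ne hq0p (Ne.symm hbne)]
              exact hval.symm
            · rw [if_neg hcb]
        · push_neg at hex
          rw [list_sum_zero, add_zero]
          · by_contra hnz
            obtain ⟨q, hqm, hval⟩ := hsupp (f ∘ Equiv.swap p q1) hnz
            have hvp : (f ∘ Equiv.swap p q1) p = f q1 := by
              simp [Function.comp_apply]
            rcases List.mem_cons.mp hqm with heq | hqt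
            · have e1 : (f ∘ Equiv.swap p q1) q1 = f p := by simp
              rw [heq, e1, hvp] at hval
              exact hpq1 hval
            · have hq1q : q1 ≠ q := fun hh => hq1t (hh ▸ hqt)
              have hqp : q ≠ p := hp q (by simp [hqt])
              have e3 : (f ∘ Equiv.swap p q1) q = f q := by
                simp [Equiv.swap_apply_of_ne_of_ne hqp hq1q.symm]
              rw [e3, hvp] at hval
              exact hex q hqt hval
          · intro b hb'
            rw [if_neg (fun hh => hex b hb' hh.symm)]
    have hS : (t.map (fun q => v2 (f ∘ Equiv.swap p q))).sum
        = - v1 (f ∘ Equiv.swap p q1) := by linear_combination hjunk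
    rw [ha, hB, hS, hsplit f]
    field_simp
    ring

/-! ### matrix-level machinery -/

lemma mat_ext_mulVec {K : Type*} [Fintype K] [DecidableEq K] {M N : Matrix K K ℂ}
    (h : ∀ v, M.mulVec v = N.mulVec v) : M = N := by
  ext i j
  have := congrFun (h (Pi.single j 1)) i
  simpa [Matrix.mulVec_single] using this

lemma swap_disjoint_comp {p q r s : ι} (h1 : p ≠ r) (h2 : p ≠ s) (h3 : q ≠ r) (h4 : q ≠ s)
    (f : ι → Fin n) :
    (f ∘ Equiv.swap p q) ∘ Equiv.swap r s = (f ∘ Equiv.swap r s) ∘ Equiv.swap p q := by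
  funext x
  simp only [Function.comp_apply, Equiv.swap_apply_def]
  split_ifs <;> simp_all

lemma commute_lift2_Rm (p q r s : ι) (x y : ℂ) (hpq : p ≠ q) (hrs : r ≠ s)
    (h1 : p ≠ r) (h2 : p ≠ s) (h3 : q ≠ r) (h4 : q ≠ s) :
    Commute (lift2 p q (Rm n x) : TMat ι n) (lift2 r s (Rm n y)) := by
  apply mat_ext_mulVec
  intro v
  rw [← Matrix.mulVec_mulVec, ← Matrix.mulVec_mulVec,
    mulVec_lift2_Rm r s hrs, mulVec_lift2_Rm p q hpq,
    mulVec_lift2_Rm p q hpq, mulVec_lift2_Rm r s hrs]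
  funext f
  simp only [ract]
  rw [swap_disjoint_comp h1 h2 h3 h4 f]
  ring

lemma prod_map_flatMap {α β M : Type*} [Monoid M] (l : List α) (g : α → List β) (F : β → M) :
    ((l.flatMap g).map F).prod = (l.map (fun a => ((g a).map F).prod)).prod := by
  induction l with
  | nil => simp
  | cons a t ih => simp [List.flatMap_cons, List.map_append, List.prod_append, ih]

lemma prod_mul_prod_of_commute {β M : Type*} [Monoid M] (l : List β) (f g : β → M)
    (hnd : l.Nodup)
    (h : ∀ b ∈ l, ∀ b' ∈ l, b ≠ b' → Commute (f b) (g b')) :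
    (l.map f).prod * (l.map g).prod = (l.map (fun b => f b * g b)).prod := by
  induction l with
  | nil => simp
  | cons b t ih =>
    simp only [List.map_cons, List.prod_cons]
    have hcomm : Commute ((t.map f).prod) (g b) := by
      apply Commute.list_prod_left
      intro z hz
      obtain ⟨b', hb', rfl⟩ := List.mem_map.mp hz
      exact h b' (by simp [hb']) b (by simp)
        (fun hh => (List.nodup_cons.mp hnd).1 (hh ▸ hb'))
    calc f b * (t.map f).prod * (g b * (t.map g).prod)
        = f b * ((t.map f).prod * g b) * (t.map g).prod := by simp only [mul_assoc]
      _ = f b * (g b * (t.map f).prod) * (t.map g).prod := by rw [hcomm.eq]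
      _ = (f b * g b) * ((t.map f).prod * (t.map g).prod) := by rw [mul_assoc, mul_assoc, mul_assoc]
      _ = (f b * g b) * (t.map (fun b => f b * g b)).prod := by
          rw [ih (List.nodup_cons.mp hnd).2
            (fun b1 hb1 b2 hb2 hne => h b1 (by simp [hb1]) b2 (by simp [hb2]) hne)]

lemma prod_interchange {α β M : Type*} [Monoid M] (l₁ : List α) (l₂ : List β) (X : α → β → M)
    (h : ∀ a ∈ l₁, ∀ a' ∈ l₁, ∀ b ∈ l₂, ∀ b' ∈ l₂, a ≠ a' → b ≠ b' → Commute (X a b) (X a' b'))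
    (h₁ : l₁.Nodup) (h₂ : l₂.Nodup) :
    (l₁.map (fun a => (l₂.map (X a)).prod)).prod
      = (l₂.map (fun b => (l₁.map (fun a => X a b)).prod)).prod := by
  induction l₁ with
  | nil =>
    simp only [List.map_nil, List.prod_nil]
    rw [List.prod_eq_one]
    intro z hz
    obtain ⟨b, hb, rfl⟩ := List.mem_map.mp hz
    simp
  | cons a t ih =>
    simp only [List.map_cons, List.prod_cons]
    rw [ih (fun a1 h1 a2 h2 => h a1 (by simp [h1]) a2 (by simp [h2])) (List.nodup_cons.mp h₁).2]
    have hcm : ∀ b ∈ l₂, ∀ b' ∈ l₂, b ≠ b' →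
        Commute (X a b) ((t.map (fun a' => X a' b')).prod) := by
      intro b hb b' hb' hne
      apply Commute.list_prod_right
      intro z hz
      obtain ⟨a', ha', rfl⟩ := List.mem_map.mp hz
      exact h a (by simp) a' (by simp [ha']) b hb b' hb'
        (fun hh => (List.nodup_cons.mp h₁).1 (hh ▸ ha')) hne
    rw [prod_mul_prod_of_commute l₂ (X a)
      (fun b => (t.map (fun a' => X a' b)).prod) h₂ hcm]

lemma col_mulVec (p : ι) (qs : List ι) (A : ι → ℂ) (c : ℂ) (v : (ι → Fin n) → ℂ)
    (hq : ∀ q ∈ qs, q ≠ p)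
    (hidx : ∀ (i : ℕ) (h : i < qs.length), A (qs[i]) = c + i) :
    ((qs.map (fun q => (lift2 p q (Rm n (A q)) : TMat ι n))).prod).mulVec v
      = colApply p qs c v := by
  induction qs generalizing c v with
  | nil => simp [colApply, Matrix.one_mulVec]
  | cons q t ih =>
    simp only [List.map_cons, List.prod_cons]
    rw [← Matrix.mulVec_mulVec]
    have h0 : A q = c := by
      have := hidx 0 (by simp)
      simpa using this
    have hrest : ((t.map (fun q => (lift2 p q (Rm n (A q)) : TMat ι n))).prod).mulVec v
        = colApply p t (c+1) v := by
      apply ih (c+1) v (fun q' hq' => hq q' (by simp [hq']))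
      intro i hi
      have := hidx (i+1) (by simpa using Nat.succ_lt_succ hi)
      simp only [List.getElem_cons_succ] at this
      rw [this]
      push_cast
      ring
    rw [hrest, h0, mulVec_lift2_Rm p q (Ne.symm (hq q (by simp))) c]
    rfl

lemma eig_list {α : Type*} (φ : (ι → Fin n) → ℂ) (L : List α) (M : α → TMat ι n) (γ : α → ℂ)
    (h : ∀ x ∈ L, ∀ s : ℂ, (M x).mulVec (s • φ) = (γ x * s) • φ) :
    ∀ s : ℂ, ((L.map M).prod).mulVec (s • φ) = ((L.map γ).prod * s) • φ := by
  induction L with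
  | nil => intro s; simp [Matrix.one_mulVec]
  | cons x t ih =>
    intro s
    simp only [List.map_cons, List.prod_cons]
    rw [← Matrix.mulVec_mulVec, ih (fun y hy => h y (by simp [hy])),
      h x (by simp), mul_assoc]

lemma prod_filter_ite {α M : Type*} [Monoid M] (l : List α) (pr : α → Bool) (F : α → M) :
    ((l.filter pr).map F).prod = (l.map (fun a => if pr a then F a else 1)).prod := by
  induction l with
  | nil => simp
  | cons a t ih =>
    by_cases hpa : pr a = true
    · simp [List.filter_cons, hpa, ih]
    · simp only [Bool.not_eq_true] at hpa
      simp [List.filter_cons, hpa, ih]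

lemma tele_prod (K : ℕ) (d : ℂ) (h : ∀ i : ℕ, i ≤ K → d + i ≠ 0) :
    ∏ i ∈ Finset.range K, ((d + i) / (d + i + 1)) = d / (d + K) := by
  induction K with
  | zero =>
    simp only [Finset.range_zero, Finset.prod_empty, Nat.cast_zero, add_zero]
    rw [div_self (by simpa using h 0 (le_refl 0))]
  | succ K ihK =>
    rw [Finset.prod_range_succ, ihK (fun i hi => h i (by omega))]
    have hK : d + K ≠ 0 := by simpa using h K (by omega)
    rw [div_mul_div_comm]
    rw [show d + (K:ℂ) + 1 = d + ((K+1 : ℕ) : ℂ) by push_cast; ring]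
    rw [mul_comm (d + (K:ℂ)) (d + ((K+1:ℕ):ℂ))]
    exact mul_div_mul_right _ _ hK

/-! ### properties of phiSeg -/

lemma antisym_comp_perm (k : ℕ) (π : Equiv.Perm (Fin k)) (t u : Fin k → Fin n) :
    antisym n k (t ∘ π) u = ((Equiv.Perm.sign π : ℤ) : ℂ) * antisym n k t u := by
  simp only [antisym, Matrix.smul_apply, Matrix.sum_apply, Matrix.smul_apply, permMat,
    smul_eq_mul]
  have hmain : (∑ σ : Equiv.Perm (Fin k),
        ((Equiv.Perm.sign σ : ℤ) : ℂ) * (if (t ∘ π) ∘ σ = u then 1 else 0))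
      = ∑ σ : Equiv.Perm (Fin k), ((Equiv.Perm.sign π : ℤ) : ℂ)
          * (((Equiv.Perm.sign σ : ℤ) : ℂ) * (if t ∘ σ = u then 1 else 0)) := by
    apply Fintype.sum_equiv (Equiv.mulLeft π)
    intro σ
    have hco : (t ∘ π) ∘ σ = t ∘ (π * σ) := by
      funext x; simp [Equiv.Perm.coe_mul]
    rw [hco]
    have hsg : ((Equiv.Perm.sign (π * σ) : ℤ) : ℂ)
        = ((Equiv.Perm.sign π : ℤ) : ℂ) * ((Equiv.Perm.sign σ : ℤ) : ℂ) := by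
      rw [_root_.map_mul Equiv.Perm.sign π σ]
      push_cast
      rfl
    have hsq : ((Equiv.Perm.sign π : ℤ) : ℂ) * ((Equiv.Perm.sign π : ℤ) : ℂ) = 1 := by
      rcases Int.units_eq_one_or (Equiv.Perm.sign π) with h | h <;> simp [h]
    simp only [Equiv.coe_mulLeft, hsg]
    calc ((Equiv.Perm.sign σ : ℤ) : ℂ) * (if t ∘ (π * σ) = u then 1 else 0)
        = (((Equiv.Perm.sign π : ℤ) : ℂ) * ((Equiv.Perm.sign π : ℤ) : ℂ))
          * (((Equiv.Perm.sign σ : ℤ) : ℂ) * (if t ∘ (π * σ) = u then 1 else 0)) := by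
          rw [hsq, one_mul]
      _ = _ := by ring_nf; congr
  rw [hmain, ← Finset.mul_sum]
  ring

lemma sigma_mk_ne_fst {m : ℕ} {ν : Fin m → ℕ} {a a' : Fin m} (h : a ≠ a')
    (i : Fin (ν a)) (i' : Fin (ν a')) : (⟨a, i⟩ : Pos m ν) ≠ ⟨a', i'⟩ :=
  fun hh => h (congrArg Sigma.fst hh)

lemma sigma_mk_ne_snd {m : ℕ} {ν : Fin m → ℕ} {a : Fin m} {i i' : Fin (ν a)} (h : i ≠ i') :
    (⟨a, i⟩ : Pos m ν) ≠ ⟨a, i'⟩ := by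
  intro hh
  injection hh with h1 h2
  exact h h2

lemma phiSeg_swap {m : ℕ} {ν : Fin m → ℕ} (hn0 : 0 < n) (b : Fin m) {j j' : Fin (ν b)}
    (hjj : j ≠ j') (g : Pos m ν → Fin n) :
    phiSeg n m hn0 ν (g ∘ Equiv.swap ⟨b, j⟩ ⟨b, j'⟩) = - phiSeg n m hn0 ν g := by
  unfold phiSeg
  have key : ∀ a : Fin m,
      antisym n (ν a) (fun i => (g ∘ Equiv.swap ⟨b, j⟩ ⟨b, j'⟩) ⟨a, i⟩)
        (fun i => ⟨(i : ℕ) % n, Nat.mod_lt _ hn0⟩)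
      = (if a = b then (-1 : ℂ) else 1) *
        antisym n (ν a) (fun i => g ⟨a, i⟩) (fun i => ⟨(i : ℕ) % n, Nat.mod_lt _ hn0⟩) := by
    intro a
    rcases eq_or_ne a b with rfl | hab
    · rw [if_pos rfl]
      have hres : (fun i => (g ∘ Equiv.swap (⟨a, j⟩ : Pos m ν) ⟨a, j'⟩) ⟨a, i⟩)
          = (fun i => g ⟨a, i⟩) ∘ (Equiv.swap j j') := by
        funext i
        simp only [Function.comp_apply]
        rcases eq_or_ne i j with rfl | hij
        · rw [Equiv.swap_apply_left, Equiv.swap_apply_left]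
        · rcases eq_or_ne i j' with rfl | hij'
          · rw [Equiv.swap_apply_right, Equiv.swap_apply_right]
          · rw [Equiv.swap_apply_of_ne_of_ne (sigma_mk_ne_snd hij) (sigma_mk_ne_snd hij'),
              Equiv.swap_apply_of_ne_of_ne hij hij']
      rw [hres, antisym_comp_perm, Equiv.Perm.sign_swap hjj]
      push_cast
      ring_nf
    · rw [if_neg hab, one_mul]
      congr 1
      funext i
      simp only [Function.comp_apply]
      rw [Equiv.swap_apply_of_ne_of_ne (sigma_mk_ne_fst hab i j) (sigma_mk_ne_fst hab i j')]
  rw [Finset.prod_congr rfl (fun a _ => key a), Finset.prod_mul_distrib,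
    Finset.prod_ite_eq' Finset.univ b (fun _ => (-1 : ℂ)), if_pos (Finset.mem_univ b)]
  ring

lemma antisym_ne_zero_perm {k : ℕ} {t u : Fin k → Fin n}
    (h : antisym n k t u ≠ 0) : ∃ σ : Equiv.Perm (Fin k), t ∘ σ = u := by
  simp only [antisym, Matrix.smul_apply, Matrix.sum_apply, Matrix.smul_apply, permMat,
    smul_eq_mul] at h
  have hsum : (∑ σ : Equiv.Perm (Fin k),
      ((Equiv.Perm.sign σ : ℤ) : ℂ) * (if t ∘ σ = u then 1 else 0)) ≠ 0 := by
    intro hz; exact h (by rw [hz, mul_zero])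
  obtain ⟨σ, -, hσ⟩ := Finset.exists_ne_zero_of_sum_ne_zero hsum
  refine ⟨σ, ?_⟩
  by_contra hc
  rw [if_neg hc, mul_zero] at hσ
  exact hσ rfl

lemma phiSeg_supp {m : ℕ} {ν : Fin m → ℕ} (hn0 : 0 < n) {g : Pos m ν → Fin n}
    (hg : phiSeg n m hn0 ν g ≠ 0) (a b : Fin m) (hab : ν a ≤ ν b) (i : Fin (ν a)) :
    ∃ j : Fin (ν b), g ⟨b, j⟩ = g ⟨a, i⟩ := by
  unfold phiSeg at hg
  have hfac := Finset.prod_ne_zero_iff.mp hg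
  obtain ⟨σa, hσa⟩ := antisym_ne_zero_perm (hfac a (Finset.mem_univ a))
  obtain ⟨σb, hσb⟩ := antisym_ne_zero_perm (hfac b (Finset.mem_univ b))
  -- t_c = can_c ∘ σ_c⁻¹
  have ha : ∀ x : Fin (ν a), g ⟨a, σa x⟩ = ⟨((x : ℕ)) % n, Nat.mod_lt _ hn0⟩ :=
    fun x => congrFun hσa x
  have hb : ∀ x : Fin (ν b), g ⟨b, σb x⟩ = ⟨((x : ℕ)) % n, Nat.mod_lt _ hn0⟩ :=
    fun x => congrFun hσb x
  set x : Fin (ν a) := σa⁻¹ i with hx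
  have hgi : g ⟨a, i⟩ = ⟨((x : ℕ)) % n, Nat.mod_lt _ hn0⟩ := by
    have := ha x
    rwa [hx, ← Equiv.Perm.mul_apply, mul_inv_cancel, Equiv.Perm.one_apply] at this
  have hxb : ((x : ℕ)) < ν b := lt_of_lt_of_le x.isLt hab
  refine ⟨σb ⟨(x : ℕ), hxb⟩, ?_⟩
  rw [hb ⟨(x : ℕ), hxb⟩, hgi]

/-! ### assembly -/

section Assembly

variable {m : ℕ} (ν : Fin m → ℕ) (μ : Fin m → ℂ)

/-- column operator: sites of segment b in reverse order, hit from site p -/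
def colM (n : ℕ) {m : ℕ} (ν : Fin m → ℕ) (μ : Fin m → ℂ) (p : Pos m ν) (b : Fin m) :
    TMat (Pos m ν) n :=
  ((((List.finRange (ν b)).reverse.map (fun j => (⟨b, j⟩ : Pos m ν)))).map
    (fun q => lift2 p q (Rm n (xPos m ν μ (rhoGL m) q - xPos m ν μ (rhoGL m) p)))).prod

def rowM (n : ℕ) {m : ℕ} (ν : Fin m → ℕ) (μ : Fin m → ℂ) (a b : Fin m) (j : Fin (ν b)) :
    TMat (Pos m ν) n :=
  (((List.finRange (ν a))).map
    (fun i => lift2 (⟨a, i⟩ : Pos m ν) (⟨b, j⟩ : Pos m ν)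
      (Rm n (xPos m ν μ (rhoGL m) ⟨b, j⟩ - xPos m ν μ (rhoGL m) ⟨a, i⟩)))).prod

def DM (n : ℕ) {m : ℕ} (ν : Fin m → ℕ) (μ : Fin m → ℂ) (a b : Fin m) :
    TMat (Pos m ν) n :=
  ((List.finRange (ν a)).map (fun i => colM n ν μ ⟨a, i⟩ b)).prod

lemma commute_baseR {n : ℕ} (a b a' b' : Fin m) (i : Fin (ν a)) (j : Fin (ν b))
    (i' : Fin (ν a')) (j' : Fin (ν b')) (x y : ℂ)
    (hab : a ≠ b) (hab' : a' ≠ b') (h1 : (⟨a,i⟩ : Pos m ν) ≠ ⟨a',i'⟩)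
    (h2 : a ≠ b') (h3 : b ≠ a') (h4 : (⟨b,j⟩ : Pos m ν) ≠ ⟨b',j'⟩) :
    Commute (lift2 (⟨a,i⟩ : Pos m ν) (⟨b,j⟩ : Pos m ν) (Rm n x) : TMat (Pos m ν) n)
      (lift2 (⟨a',i'⟩ : Pos m ν) (⟨b',j'⟩ : Pos m ν) (Rm n y)) :=
  commute_lift2_Rm _ _ _ _ x y (sigma_mk_ne_fst hab i j) (sigma_mk_ne_fst hab' i' j')
    h1 (sigma_mk_ne_fst h2 i j') (sigma_mk_ne_fst h3 j i') h4

/-- Step A+B : structure of Bop -/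
lemma Bop_structure (n : ℕ) :
    Bop n m ν μ (rhoGL m)
      = ((List.finRange m).map (fun a =>
          (((List.finRange m).filter (fun b => decide (a < b))).map
            (fun b => DM n ν μ a b)).prod)).prod := by
  unfold Bop pairsB posList
  rw [prod_map_flatMap, prod_map_flatMap]
  apply congrArg List.prod
  apply List.map_congr_left
  intro a _
  rw [List.map_map]
  -- now: per i, the inner flatMap product
  have inner : ∀ i : Fin (ν a),
      ((((List.finRange m).filter (fun b => decide ((⟨a, i⟩ : Pos m ν).1 < b))).flatMap
          (fun b => ((List.finRange (ν b)).reverse.map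
            (fun j => ((⟨a, i⟩ : Pos m ν), (⟨b, j⟩ : Pos m ν)))))).map
        (fun pq => lift2 pq.1 pq.2
          (Rm n (xPos m ν μ (rhoGL m) pq.2 - xPos m ν μ (rhoGL m) pq.1)))).prod
      = (((List.finRange m).filter (fun b => decide (a < b))).map
          (fun b => colM n ν μ ⟨a, i⟩ b)).prod := by
    intro i
    rw [prod_map_flatMap]
    apply congrArg List.prod
    apply List.map_congr_left
    intro b _
    rw [List.map_map]
    unfold colM
    rw [List.map_map]
    rfl
  calc ((List.finRange (ν a)).map
        ((fun p => (((((List.finRange m).filter (fun b => decide (p.1 < b))).flatMap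
            (fun b => ((List.finRange (ν b)).reverse.map (fun j => (p, (⟨b, j⟩ : Pos m ν))))))).map
          (fun pq => lift2 pq.1 pq.2
            (Rm n (xPos m ν μ (rhoGL m) pq.2 - xPos m ν μ (rhoGL m) pq.1)))).prod)
          ∘ (fun i => (⟨a, i⟩ : Pos m ν)))).prod
      = ((List.finRange (ν a)).map (fun i =>
          (((List.finRange m).filter (fun b => decide (a < b))).map
            (fun b => colM n ν μ ⟨a, i⟩ b)).prod)).prod := by
        apply congrArg List.prod
        apply List.map_congr_left
        intro i _
        exact inner i
    _ = _ := by
        have hcomm : ∀ i ∈ List.finRange (ν a), ∀ i' ∈ List.finRange (ν a),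
            ∀ b ∈ (List.finRange m).filter (fun b => decide (a < b)),
            ∀ b' ∈ (List.finRange m).filter (fun b => decide (a < b)),
            i ≠ i' → b ≠ b' →
            Commute (colM n ν μ ⟨a, i⟩ b) (colM n ν μ ⟨a, i'⟩ b') := by
          intro i _ i' _ b hb b' hb' hii hbb
          have hab : a < b := by
            have := (List.mem_filter.mp hb).2
            exact of_decide_eq_true this
          have hab' : a < b' := by
            have := (List.mem_filter.mp hb').2
            exact of_decide_eq_true this
          -- Commute (colM ⟨a,i⟩ b) (colM ⟨a,i'⟩ b')
          unfold colM
          apply Commute.list_prod_left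
          intro z hz
          obtain ⟨q, hq, rfl⟩ := List.mem_map.mp hz
          obtain ⟨j, hj, rfl⟩ := List.mem_map.mp hq
          apply Commute.list_prod_right
          intro w hw
          obtain ⟨q', hq', rfl⟩ := List.mem_map.mp hw
          obtain ⟨j', hj', rfl⟩ := List.mem_map.mp hq'
          exact commute_baseR ν a b a b' i j i' j' _ _ hab.ne hab'.ne
            (sigma_mk_ne_snd hii) hab'.ne hab.ne' (sigma_mk_ne_fst hbb j j')
        rw [prod_interchange (List.finRange (ν a))
          ((List.finRange m).filter (fun b => decide (a < b)))
          (fun i b => colM n ν μ ⟨a, i⟩ b) hcomm (List.nodup_finRange _)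
          ((List.nodup_finRange m).filter _)]
        rfl

lemma rho_diff (a b : Fin m) : rhoGL m b - rhoGL m a = ((a:ℕ):ℂ) - ((b:ℕ):ℂ) := by
  unfold rhoGL; ring

lemma mk_inj {b : Fin m} : Function.Injective (fun j => (⟨b, j⟩ : Pos m ν)) := by
  intro j j' h
  cases h
  rfl

section EigenCols

variable {n : ℕ} (hn0 : 0 < n)

lemma hnzW (hμ : ∀ a b : Fin m, a ≠ b → ∀ z : ℤ, μ a - μ b ≠ (z : ℂ))
    (a b : Fin m) (hab : a ≠ b) (z : ℤ) :
    μ b - μ a + rhoGL m b - rhoGL m a + (z:ℂ) ≠ 0 := by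
  intro h0
  refine hμ b a hab.symm ((b:ℕ) - (a:ℕ) - z : ℤ) ?_
  unfold rhoGL at h0
  push_cast
  push_cast at h0
  linear_combination h0

lemma col_eigen_le (hμ : ∀ a b : Fin m, a ≠ b → ∀ z : ℤ, μ a - μ b ≠ (z : ℂ)) (a b : Fin m) (hab : a < b) (hle : ν a ≤ ν b) (i : Fin (ν a)) (s : ℂ) :
    (colM n ν μ ⟨a, i⟩ b).mulVec (s • phiSeg n m hn0 ν)
      = (((μ b - μ a + rhoGL m b - rhoGL m a - (ν a : ℂ) + (i:ℕ))
          / (μ b - μ a + rhoGL m b - rhoGL m a - (ν a : ℂ) + (i:ℕ) + 1)) * s)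
          • phiSeg n m hn0 ν := by
  have hbne : b ≠ a := hab.ne'
  set φ := phiSeg n m hn0 ν with hφdef
  set p : Pos m ν := ⟨a, i⟩ with hpdef
  set W : ℂ := μ b - μ a + rhoGL m b - rhoGL m a with hWdef
  set c : ℂ := W - (ν a : ℂ) + 1 + (i : ℕ) with hcdef
  set qs : List (Pos m ν) :=
    ((List.finRange (ν b)).reverse.map (fun j => (⟨b, j⟩ : Pos m ν))) with hqsdef
  have hlen : qs.length = ν b := by simp [hqsdef]
  have hq_ne : ∀ q ∈ qs, q ≠ p := by
    intro q hq
    obtain ⟨j, -, rfl⟩ := List.mem_map.mp hq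
    exact sigma_mk_ne_fst hbne j i
  have hcol : colM n ν μ p b = ((qs.map (fun q =>
      (lift2 p q (Rm n ((fun q => xPos m ν μ (rhoGL m) q - xPos m ν μ (rhoGL m) p) q))
        : TMat (Pos m ν) n))).prod) := rfl
  rw [hcol, col_mulVec p qs _ c (s • φ) hq_ne ?hidx, inside_col p qs c (s • φ)
    ?hnd hq_ne ?hc ?hanti ?hsupp]
  · funext f
    have h1 : c - 1 = W - (ν a : ℂ) + (i:ℕ) := by rw [hcdef]; ring
    have h2 : c = W - (ν a : ℂ) + (i:ℕ) + 1 := by rw [hcdef]; ring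
    simp only [Pi.smul_apply, smul_eq_mul]
    rw [h1, h2]
    ring
  case hidx =>
    intro k hk
    rw [hlen] at hk
    simp only [hqsdef, List.getElem_map, List.getElem_reverse, List.length_reverse,
      List.length_finRange, List.getElem_finRange]
    unfold xPos
    simp only [Fin.coe_cast, Fin.val_mk]
    have h1 : (ν b : ℕ) - 1 - k = ν b - (k+1) := by omega
    rw [h1, Nat.cast_sub (by omega : k + 1 ≤ ν b), hcdef, hWdef]
    unfold rhoGL
    push_cast
    ring
  case hnd =>
    exact (List.nodup_reverse.mpr (List.nodup_finRange (ν b))).map (mk_inj ν)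
  case hc =>
    intro k hk
    rw [hcdef, hWdef]
    intro h0
    apply hnzW μ hμ a b hab.ne ((1:ℤ) + (i:ℕ) + (k:ℕ) - (ν a : ℕ))
    push_cast
    push_cast at h0
    linear_combination h0
  case hanti =>
    intro q hq q' hq' hne f
    obtain ⟨j, -, rfl⟩ := List.mem_map.mp hq
    obtain ⟨j', -, rfl⟩ := List.mem_map.mp hq'
    have hjj : j ≠ j' := fun hh => hne (by rw [hh])
    simp only [Pi.smul_apply, smul_eq_mul, hφdef, phiSeg_swap hn0 b hjj f]
    ring
  case hsupp =>
    intro f hf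
    have hφf : φ f ≠ 0 := by
      intro h0
      apply hf
      simp only [Pi.smul_apply, smul_eq_mul, h0, mul_zero]
    obtain ⟨j, hj⟩ := phiSeg_supp hn0 hφf a b hle i
    exact ⟨⟨b, j⟩, List.mem_map.mpr ⟨j, List.mem_reverse.mpr (List.mem_finRange j), rfl⟩, hj⟩

lemma row_eigen_gt (hμ : ∀ a b : Fin m, a ≠ b → ∀ z : ℤ, μ a - μ b ≠ (z : ℂ)) (a b : Fin m) (hab : a < b) (hgt : ν b ≤ ν a) (j : Fin (ν b)) (s : ℂ) :
    (rowM n ν μ a b j).mulVec (s • phiSeg n m hn0 ν)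
      = (((μ b - μ a + rhoGL m b - rhoGL m a + (ν b : ℂ) - (ν a : ℂ) - ((j:ℕ):ℂ) - 1)
          / (μ b - μ a + rhoGL m b - rhoGL m a + (ν b : ℂ) - (ν a : ℂ) - ((j:ℕ):ℂ))) * s)
          • phiSeg n m hn0 ν := by
  have hbne : b ≠ a := hab.ne'
  set φ := phiSeg n m hn0 ν with hφdef
  set p : Pos m ν := ⟨b, j⟩ with hpdef
  set W : ℂ := μ b - μ a + rhoGL m b - rhoGL m a with hWdef
  set c : ℂ := W + (ν b : ℂ) - (ν a : ℂ) - ((j:ℕ):ℂ) with hcdef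
  set qs : List (Pos m ν) := ((List.finRange (ν a)).map (fun i => (⟨a, i⟩ : Pos m ν)))
    with hqsdef
  have hlen : qs.length = ν a := by simp [hqsdef]
  have hq_ne : ∀ q ∈ qs, q ≠ p := by
    intro q hq
    obtain ⟨i, -, rfl⟩ := List.mem_map.mp hq
    exact sigma_mk_ne_fst hab.ne i j
  have hrow : rowM n ν μ a b j = ((qs.map (fun q =>
      (lift2 p q (Rm n ((fun q => xPos m ν μ (rhoGL m) p - xPos m ν μ (rhoGL m) q) q))
        : TMat (Pos m ν) n))).prod) := by
    unfold rowM
    rw [hqsdef, List.map_map]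
    apply congrArg List.prod
    apply List.map_congr_left
    intro i _
    exact lift2_Rm_symm _ _ _
  rw [hrow, col_mulVec p qs _ c (s • φ) hq_ne ?hidx, inside_col p qs c (s • φ)
    ?hnd hq_ne ?hc ?hanti ?hsupp]
  · funext f
    have h1 : c - 1 = W + (ν b : ℂ) - (ν a : ℂ) - ((j:ℕ):ℂ) - 1 := by rw [hcdef]
    have h2 : c = W + (ν b : ℂ) - (ν a : ℂ) - ((j:ℕ):ℂ) := hcdef
    simp only [Pi.smul_apply, smul_eq_mul]
    rw [h1, h2]
    ring
  case hidx =>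
    intro k hk
    rw [hlen] at hk
    simp only [hqsdef, List.getElem_map, List.getElem_finRange]
    unfold xPos
    simp only [Fin.coe_cast, Fin.val_mk]
    rw [hcdef, hWdef]
    unfold rhoGL
    push_cast
    ring
  case hnd =>
    exact (List.nodup_finRange (ν a)).map (mk_inj ν)
  case hc =>
    intro k hk
    rw [hcdef, hWdef]
    intro h0
    apply hnzW μ hμ a b hab.ne ((ν b : ℕ) - ((ν a : ℕ) : ℤ) - (j:ℕ) + (k:ℕ))
    push_cast
    push_cast at h0
    linear_combination h0
  case hanti =>
    intro q hq q' hq' hne f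
    obtain ⟨i, -, rfl⟩ := List.mem_map.mp hq
    obtain ⟨i', -, rfl⟩ := List.mem_map.mp hq'
    have hii : i ≠ i' := fun hh => hne (by rw [hh])
    simp only [Pi.smul_apply, smul_eq_mul, hφdef, phiSeg_swap hn0 a hii f]
    ring
  case hsupp =>
    intro f hf
    have hφf : φ f ≠ 0 := by
      intro h0
      apply hf
      simp only [Pi.smul_apply, smul_eq_mul, h0, mul_zero]
    obtain ⟨i, hi⟩ := phiSeg_supp hn0 hφf b a hgt j
    exact ⟨⟨a, i⟩, List.mem_map.mpr ⟨i, List.mem_finRange i, rfl⟩, hi⟩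

lemma block_eigen (hμ : ∀ a b : Fin m, a ≠ b → ∀ z : ℤ, μ a - μ b ≠ (z : ℂ))
    (a b : Fin m) (hab : a < b) (s : ℂ) :
    (DM n ν μ a b).mulVec (s • phiSeg n m hn0 ν)
      = ((if ν a ≤ ν b then
            ((μ b - μ a + rhoGL m b - rhoGL m a - (ν a : ℂ))
              / (μ b - μ a + rhoGL m b - rhoGL m a))
          else
            ((μ b - μ a + rhoGL m b - rhoGL m a - (ν a : ℂ))
              / (μ b - μ a + rhoGL m b - rhoGL m a - (ν a : ℂ) + (ν b : ℂ)))) * s)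
        • phiSeg n m hn0 ν := by
  set W : ℂ := μ b - μ a + rhoGL m b - rhoGL m a with hWdef
  set d : ℂ := W - (ν a : ℂ) with hddef
  have hd : ∀ i : ℕ, i ≤ max (ν a) (ν b) → d + (i:ℂ) ≠ 0 := by
    intro i hi h0
    apply hnzW μ hμ a b hab.ne ((i:ℤ) - (ν a : ℕ))
    rw [hddef, hWdef] at h0
    push_cast
    linear_combination h0
  by_cases hle : ν a ≤ ν b
  · rw [if_pos hle]
    have hmain := eig_list (phiSeg n m hn0 ν) (List.finRange (ν a))
      (fun i => colM n ν μ ⟨a, i⟩ b)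
      (fun i => (W - (ν a : ℂ) + ((i:ℕ):ℂ)) / (W - (ν a : ℂ) + ((i:ℕ):ℂ) + 1))
      (fun i _ s' => col_eigen_le ν μ hn0 hμ a b hab hle i s') s
    rw [show DM n ν μ a b
      = ((List.finRange (ν a)).map (fun i => colM n ν μ ⟨a, i⟩ b)).prod from rfl, hmain]
    congr 2
    rw [← Fin.prod_univ_def]
    rw [show (fun i : Fin (ν a) => (W - (ν a : ℂ) + ((i:ℕ):ℂ)) / (W - (ν a : ℂ) + ((i:ℕ):ℂ) + 1))
      = (fun i : Fin (ν a) => (fun k : ℕ => (d + (k:ℂ)) / (d + (k:ℂ) + 1)) (i : ℕ)) from by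
        funext i; rw [hddef]]
    rw [Fin.prod_univ_eq_prod_range (fun k : ℕ => (d + (k:ℂ)) / (d + (k:ℂ) + 1)) (ν a)]
    rw [tele_prod (ν a) d (fun i hi => hd i (le_trans hi (le_max_left _ _)))]
    rw [hddef]
    congr 1
    ring
  · rw [if_neg hle]
    push_neg at hle
    have hge : ν b ≤ ν a := le_of_lt hle
    -- rewrite DM as product of rows
    have hcol : ∀ i : Fin (ν a), colM n ν μ ⟨a, i⟩ b
        = (((List.finRange (ν b)).reverse).map (fun j =>
            (lift2 (⟨a, i⟩ : Pos m ν) (⟨b, j⟩ : Pos m ν)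
              (Rm n (xPos m ν μ (rhoGL m) ⟨b, j⟩ - xPos m ν μ (rhoGL m) ⟨a, i⟩))
              : TMat (Pos m ν) n))).prod := by
      intro i
      unfold colM
      rw [List.map_map]
      rfl
    have hcomm : ∀ i ∈ List.finRange (ν a), ∀ i' ∈ List.finRange (ν a),
        ∀ j ∈ (List.finRange (ν b)).reverse, ∀ j' ∈ (List.finRange (ν b)).reverse,
        i ≠ i' → j ≠ j' →
        Commute ((lift2 (⟨a, i⟩ : Pos m ν) (⟨b, j⟩ : Pos m ν)
            (Rm n (xPos m ν μ (rhoGL m) ⟨b, j⟩ - xPos m ν μ (rhoGL m) ⟨a, i⟩))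
            : TMat (Pos m ν) n))
          ((lift2 (⟨a, i'⟩ : Pos m ν) (⟨b, j'⟩ : Pos m ν)
            (Rm n (xPos m ν μ (rhoGL m) ⟨b, j'⟩ - xPos m ν μ (rhoGL m) ⟨a, i'⟩)))) := by
      intro i _ i' _ j _ j' _ hii hjj
      exact commute_baseR ν a b a b i j i' j' _ _ hab.ne hab.ne
        (sigma_mk_ne_snd hii) hab.ne hab.ne' (sigma_mk_ne_snd hjj)
    have hrows : DM n ν μ a b
        = (((List.finRange (ν b)).reverse).map (fun j => rowM n ν μ a b j)).prod := by
      unfold DM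
      rw [List.map_congr_left (fun i _ => hcol i)]
      rw [prod_interchange (List.finRange (ν a)) ((List.finRange (ν b)).reverse)
        (fun i j => (lift2 (⟨a, i⟩ : Pos m ν) (⟨b, j⟩ : Pos m ν)
          (Rm n (xPos m ν μ (rhoGL m) ⟨b, j⟩ - xPos m ν μ (rhoGL m) ⟨a, i⟩))
          : TMat (Pos m ν) n)) hcomm (List.nodup_finRange _)
        (List.nodup_reverse.mpr (List.nodup_finRange _))]
      rfl
    have hmain := eig_list (phiSeg n m hn0 ν) ((List.finRange (ν b)).reverse)
      (fun j => rowM n ν μ a b j)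
      (fun j => (W + (ν b : ℂ) - (ν a : ℂ) - ((j:ℕ):ℂ) - 1)
        / (W + (ν b : ℂ) - (ν a : ℂ) - ((j:ℕ):ℂ)))
      (fun j _ s' => row_eigen_gt ν μ hn0 hμ a b hab hge j s') s
    rw [hrows, hmain]
    congr 2
    rw [List.map_reverse, List.prod_reverse, ← Fin.prod_univ_def]
    rw [Fin.prod_univ_eq_prod_range (fun k : ℕ => (W + (ν b : ℂ) - (ν a : ℂ) - (k:ℂ) - 1)
      / (W + (ν b : ℂ) - (ν a : ℂ) - (k:ℂ))) (ν b)]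
    have hrefl : ∀ k ∈ Finset.range (ν b),
        (W + (ν b : ℂ) - (ν a : ℂ) - (k:ℂ) - 1) / (W + (ν b : ℂ) - (ν a : ℂ) - (k:ℂ))
        = (fun k' : ℕ => (d + (k':ℂ)) / (d + (k':ℂ) + 1)) (ν b - 1 - k) := by
      intro k hk
      rw [Finset.mem_range] at hk
      simp only []
      have h1 : ((ν b - 1 - k : ℕ) : ℂ) = (ν b : ℂ) - 1 - (k:ℂ) := by
        have : (ν b : ℕ) - 1 - k = ν b - (k+1) := by omega
        rw [this, Nat.cast_sub (by omega : k + 1 ≤ ν b)]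
        push_cast
        ring
      rw [h1, hddef]
      congr 1 <;> ring
    rw [Finset.prod_congr rfl hrefl]
    rw [Finset.prod_range_reflect (fun k' : ℕ => (d + (k':ℂ)) / (d + (k':ℂ) + 1)) (ν b)]
    rw [tele_prod (ν b) d (fun i hi => hd i (le_trans hi (le_max_right _ _)))]

end EigenCols
end Assembly
end NT

/-- `φ_{ν₁} ⊗ ⋯ ⊗ φ_{ν_m}` is an eigenvector of `B(μ)`, with the eigenvalue
`∏_{a<b} c_{ab}` where, writing `λ_a = μ_a + ν_a`,
`c_{ab} = (λ_a−λ_b+ρ_a−ρ_b+ν_b)/(μ_a−μ_b+ρ_a−ρ_b)` if `ν_a ≤ ν_b` and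
`c_{ab} = (λ_a−λ_b+ρ_a−ρ_b+ν_b)/(λ_a−λ_b+ρ_a−ρ_b)` if `ν_a ≥ ν_b`. -/
theorem stmt11 (n m : ℕ) (hn : 2 ≤ n) (hm : 1 ≤ m) (ν : Fin m → ℕ)
    (hν : ∀ a, 1 ≤ ν a ∧ ν a ≤ n - 1) (μ : Fin m → ℂ)
    (hμ : ∀ a b, a ≠ b → ∀ z : ℤ, μ a - μ b ≠ (z : ℂ)) :
    (Bop n m ν μ (rhoGL m)).mulVec (phiSeg n m (by omega) ν)
  = (∏ a : Fin m, ∏ b : Fin m, if a < b then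
      (if ν a ≤ ν b then
        ((μ a + (ν a : ℂ)) - (μ b + (ν b : ℂ)) + rhoGL m a - rhoGL m b + (ν b : ℂ)) /
          (μ a - μ b + rhoGL m a - rhoGL m b)
      else
        ((μ a + (ν a : ℂ)) - (μ b + (ν b : ℂ)) + rhoGL m a - rhoGL m b + (ν b : ℂ)) /
          ((μ a + (ν a : ℂ)) - (μ b + (ν b : ℂ)) + rhoGL m a - rhoGL m b))
      else 1) • phiSeg n m (by omega) ν := by
  have hn0 : 0 < n := by omega
  have key : (Bop n m ν μ (rhoGL m)).mulVec (phiSeg n m hn0 ν)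
      = (∏ a : Fin m, ∏ b : Fin m, if a < b then
          (if ν a ≤ ν b then
            ((μ a + (ν a : ℂ)) - (μ b + (ν b : ℂ)) + rhoGL m a - rhoGL m b + (ν b : ℂ)) /
              (μ a - μ b + rhoGL m a - rhoGL m b)
          else
            ((μ a + (ν a : ℂ)) - (μ b + (ν b : ℂ)) + rhoGL m a - rhoGL m b + (ν b : ℂ)) /
              ((μ a + (ν a : ℂ)) - (μ b + (ν b : ℂ)) + rhoGL m a - rhoGL m b))
          else 1) • phiSeg n m hn0 ν := by
    set cab : Fin m → Fin m → ℂ := fun a b =>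
      (if ν a ≤ ν b then
        ((μ b - μ a + rhoGL m b - rhoGL m a - (ν a : ℂ))
          / (μ b - μ a + rhoGL m b - rhoGL m a))
      else
        ((μ b - μ a + rhoGL m b - rhoGL m a - (ν a : ℂ))
          / (μ b - μ a + rhoGL m b - rhoGL m a - (ν a : ℂ) + (ν b : ℂ)))) with hcab
    rw [NT.Bop_structure ν μ n]
    have houter : ∀ a ∈ List.finRange m, ∀ s : ℂ,
        ((((List.finRange m).filter (fun b => decide (a < b))).map
          (fun b => NT.DM n ν μ a b)).prod).mulVec (s • phiSeg n m hn0 ν)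
        = ((((List.finRange m).filter (fun b => decide (a < b))).map
            (fun b => cab a b)).prod * s) • phiSeg n m hn0 ν := by
      intro a _ s
      refine NT.eig_list (phiSeg n m hn0 ν) _ _ _ ?_ s
      intro b hb s'
      have hab : a < b := of_decide_eq_true (List.mem_filter.mp hb).2
      rw [hcab]
      exact NT.block_eigen ν μ hn0 hμ a b hab s'
    have hfull := NT.eig_list (phiSeg n m hn0 ν) (List.finRange m)
      (fun a => (((List.finRange m).filter (fun b => decide (a < b))).map
        (fun b => NT.DM n ν μ a b)).prod)
      (fun a => (((List.finRange m).filter (fun b => decide (a < b))).map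
        (fun b => cab a b)).prod) houter 1
    rw [one_smul] at hfull
    rw [hfull, mul_one]
    congr 1
    rw [← Fin.prod_univ_def]
    apply Finset.prod_congr rfl
    intro a _
    rw [NT.prod_filter_ite (List.finRange m) (fun b => decide (a < b)) (cab a)]
    rw [← Fin.prod_univ_def]
    apply Finset.prod_congr rfl
    intro b _
    by_cases hab : a < b
    · rw [if_pos (by simpa using hab), if_pos hab, hcab]
      beta_reduce
      by_cases hle : ν a ≤ ν b
      · rw [if_pos hle, if_pos hle]
        rw [show μ a + (ν a:ℂ) - (μ b + (ν b:ℂ)) + rhoGL m a - rhoGL m b + (ν b:ℂ)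
            = -(μ b - μ a + rhoGL m b - rhoGL m a - (ν a:ℂ)) from by ring,
          show μ a - μ b + rhoGL m a - rhoGL m b
            = -(μ b - μ a + rhoGL m b - rhoGL m a) from by ring,
          neg_div_neg_eq]
      · rw [if_neg hle, if_neg hle]
        rw [show μ a + (ν a:ℂ) - (μ b + (ν b:ℂ)) + rhoGL m a - rhoGL m b + (ν b:ℂ)
            = -(μ b - μ a + rhoGL m b - rhoGL m a - (ν a:ℂ)) from by ring,
          show μ a + (ν a:ℂ) - (μ b + (ν b:ℂ)) + rhoGL m a - rhoGL m b
            = -(μ b - μ a + rhoGL m b - rhoGL m a - (ν a:ℂ) + (ν b:ℂ)) from by ring,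
          neg_div_neg_eq]
    · rw [if_neg (by simpa using hab), if_neg hab]
  exact key
end
end
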